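/- arXiv:1606.00542 — 3 statements merged into one kernel-verified Lean document; each statement's English description precedes it below -/
import Mathlib

section
/- The map $\psi \colon \mathbb{Z}\mathscr{T}(\lambda) \to S^\lambda_{\mathbb{Z}}$ sending a $\lambda$-tableau $\t$ to the polytabloid $e_\t$ is a $\mathbb{Z}\mathrm{Sym}_n$-module epimorphism whose kernel is generated as a $\mathbb{Z}$-module by the Garnir elements $G^{\t}_{\Delta} \cdot \t$ (for $\t \in \mathscr{T}(\lambda)$ and Garnir transversals $\Delta$) together with the elements $\pi \cdot \t - \mathrm{sgn}(\pi)\,\t$ (for $\t \in \mathscr{T}(\lambda)$ and $\pi \in C_{\t}$). -/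
namespace SignedYoung
open Equiv Finset
open scoped Classical

abbrev Sym (n : ℕ) := Equiv.Perm (Fin n)

/-- Index of the block of the composition `γ` containing position `i` (0-based). -/
def blockOf (γ : List ℕ) (i : ℕ) : ℕ :=
  (List.range γ.length).countP (fun j => decide ((γ.take (j + 1)).sum ≤ i))

/-- The Young subgroup of `Sym n` associated to the composition `γ`. -/
def youngSubgroup (n : ℕ) (γ : List ℕ) : Subgroup (Sym n) where
  carrier := {σ | ∀ i : Fin n, blockOf γ (σ i) = blockOf γ i}
  one_mem' := by intro i; simp
  mul_mem' := by
    intro a b ha hb i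
    simp only [Equiv.Perm.mul_apply]
    rw [ha, hb]
  inv_mem' := by
    intro a ha i
    have h := ha (a⁻¹ i)
    rw [show a (a⁻¹ i) = i from a.apply_symm_apply i] at h
    exact h.symm

/-- The subgroup `Sym_α` of the Young subgroup `Sym_{α|β}`: block-preserving permutations
fixing all points `≥ |α|`. -/
def symA (n : ℕ) (α β : List ℕ) : Set (Sym n) :=
  {σ | σ ∈ youngSubgroup n (α ++ β) ∧ ∀ i : Fin n, α.sum ≤ (i : ℕ) → σ i = i}

/-- The subgroup `Sym_β^{+|α|}`: block-preserving permutations fixing all points `< |α|`. -/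
def symB (n : ℕ) (α β : List ℕ) : Set (Sym n) :=
  {σ | σ ∈ youngSubgroup n (α ++ β) ∧ ∀ i : Fin n, (i : ℕ) < α.sum → σ i = i}

/-- Cells of the Young diagram of the composition `lam`. -/
abbrev Cell (lam : List ℕ) := (i : Fin lam.length) × Fin (lam.get i)

/-- A `lam`-tableau: a bijective labelling of the cells by `1, …, n` (here `Fin n`). -/
abbrev Tab (n : ℕ) (lam : List ℕ) := Cell lam ≃ Fin n

/-- The row stabilizer of a tableau. -/
def rowStab {n : ℕ} {lam : List ℕ} (t : Tab n lam) : Set (Sym n) :=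
  {σ | ∀ a : Fin n, (t.symm (σ a)).1 = (t.symm a).1}

/-- The column stabilizer of a tableau. -/
def colStab {n : ℕ} {lam : List ℕ} (t : Tab n lam) : Set (Sym n) :=
  {σ | ∀ a : Fin n, ((t.symm (σ a)).2 : ℕ) = ((t.symm a).2 : ℕ)}

/-- Colours `c_1 < c_2 < ⋯ < d_1 < d_2 < ⋯` (0-based). -/
abbrev Colour := Lex (ℕ ⊕ ℕ)

def cCol (k : ℕ) : Colour := toLex (Sum.inl k)

def dCol (k : ℕ) : Colour := toLex (Sum.inr k)

/-- `T` is a `lam`-tableau of type `(α|β)`: exactly `α_k` cells of colour `c_k` and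
`β_k` of colour `d_k`. -/
def HasType {lam : List ℕ} (α β : List ℕ) (T : Cell lam → Colour) : Prop :=
  (∀ k : ℕ, (Finset.univ.filter fun c => T c = cCol k).card = α.getD k 0) ∧
  (∀ k : ℕ, (Finset.univ.filter fun c => T c = dCol k).card = β.getD k 0)

/-- The colour of the number `i` under the canonical colouring by `(α|β)`. -/
def colourOfIdx (α β : List ℕ) (i : ℕ) : Colour :=
  if blockOf (α ++ β) i < α.length then cCol (blockOf (α ++ β) i)
  else dCol (blockOf (α ++ β) i - α.length)

/-- The canonical `lam`-tableau of type `(α|β)` associated to the tableau `t0`. -/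
def canonT {n : ℕ} {lam : List ℕ} (t0 : Tab n lam) (α β : List ℕ) : Cell lam → Colour :=
  fun c => colourOfIdx α β (t0 c)

/-- The action `σ · T = T ∘ t0⁻¹ ∘ σ⁻¹ ∘ t0` of `Sym n` on tableaux of type `(α|β)`,
through the fixed tableau `t0`. -/
def actT {n : ℕ} {lam : List ℕ} (t0 : Tab n lam) (σ : Sym n) (T : Cell lam → Colour) :
    Cell lam → Colour :=
  fun c => T (t0.symm (σ⁻¹ (t0 c)))

/-- `T_d = d · T_0`. -/
def TOf {n : ℕ} {lam : List ℕ} (t0 : Tab n lam) (α β : List ℕ) (d : Sym n) :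
    Cell lam → Colour :=
  actT t0 d (canonT t0 α β)

def RowSemistd {lam : List ℕ} (T : Cell lam → Colour) : Prop :=
  ∀ c c' : Cell lam, c.1 = c'.1 → (c.2 : ℕ) < (c'.2 : ℕ) → T c ≤ T c'

def ColSemistd {lam : List ℕ} (T : Cell lam → Colour) : Prop :=
  ∀ c c' : Cell lam, (c.2 : ℕ) = (c'.2 : ℕ) → c.1 < c'.1 → T c ≤ T c'

/-- Repeats in a row occur only for colours `c_k`. -/
def RowRepeatC {lam : List ℕ} (T : Cell lam → Colour) : Prop :=
  ∀ c c' : Cell lam, c.1 = c'.1 → (c.2 : ℕ) ≠ (c'.2 : ℕ) → T c = T c' → ∃ k, T c = cCol k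

/-- Repeats in a column occur only for colours `d_k`. -/
def ColRepeatD {lam : List ℕ} (T : Cell lam → Colour) : Prop :=
  ∀ c c' : Cell lam, (c.2 : ℕ) = (c'.2 : ℕ) → c.1 ≠ c'.1 → T c = T c' → ∃ k, T c = dCol k

def IsSemistd {lam : List ℕ} (T : Cell lam → Colour) : Prop :=
  RowSemistd T ∧ ColSemistd T ∧ RowRepeatC T ∧ ColRepeatD T

/-- A standard tableau: strictly increasing along rows and down columns. -/
def IsStd {n : ℕ} {lam : List ℕ} (t : Tab n lam) : Prop :=
  (∀ c c' : Cell lam, c.1 = c'.1 → (c.2 : ℕ) < (c'.2 : ℕ) → t c < t c') ∧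
  (∀ c c' : Cell lam, (c.2 : ℕ) = (c'.2 : ℕ) → c.1 < c'.1 → t c < t c')

def IsPartition (n : ℕ) (lam : List ℕ) : Prop :=
  lam.Pairwise (· ≥ ·) ∧ (∀ x ∈ lam, 0 < x) ∧ lam.sum = n

def IsBicomp (n : ℕ) (α β : List ℕ) : Prop :=
  (∀ x ∈ α, 0 < x) ∧ (∀ x ∈ β, 0 < x) ∧ α.sum + β.sum = n

/-- `𝒮 = {d : d⁻¹ R_{t0} d ∩ Sym_{α|β} ⊆ Sym_α}`. -/
def RSet {n : ℕ} {lam : List ℕ} (t0 : Tab n lam) (α β : List ℕ) : Set (Sym n) :=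
  {d | ∀ σ ∈ rowStab t0, d⁻¹ * σ * d ∈ youngSubgroup n (α ++ β) →
    d⁻¹ * σ * d ∈ symA n α β}

/-- `𝒞 = {d : d⁻¹ C_{t0} d ∩ Sym_{α|β} ⊆ Sym_β^{+|α|}}`. -/
def CSet {n : ℕ} {lam : List ℕ} (t0 : Tab n lam) (α β : List ℕ) : Set (Sym n) :=
  {d | ∀ σ ∈ colStab t0, d⁻¹ * σ * d ∈ youngSubgroup n (α ++ β) →
    d⁻¹ * σ * d ∈ symB n α β}

/-- The double coset `R_{t0} x Sym_{α|β}`. -/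
def dCoset {n : ℕ} {lam : List ℕ} (t0 : Tab n lam) (α β : List ℕ) (x : Sym n) :
    Set (Sym n) :=
  {ω | ∃ τ ∈ rowStab t0, ∃ ξ ∈ youngSubgroup n (α ++ β), ω = τ * x * ξ}

/-- The double coset `C_{t0} x Sym_{α|β}`. -/
def cCoset {n : ℕ} {lam : List ℕ} (t0 : Tab n lam) (α β : List ℕ) (x : Sym n) :
    Set (Sym n) :=
  {ω | ∃ σ ∈ colStab t0, ∃ ξ ∈ youngSubgroup n (α ++ β), ω = σ * x * ξ}

/-- `ε` is the sign function `ε_𝔡` on the double coset `R_{t0} 𝔡 Sym_{α|β}`: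
`ε(τ 𝔡 ξ_α ξ_β^{+|α|}) = sgn ξ_β`. -/
def IsEps {n : ℕ} {lam : List ℕ} (t0 : Tab n lam) (α β : List ℕ) (𝔡 : Sym n)
    (ε : Sym n → ℤ) : Prop :=
  ∀ τ ∈ rowStab t0, ∀ ξa ∈ symA n α β, ∀ ξb ∈ symB n α β,
    ε (τ * 𝔡 * (ξa * ξb)) = (Equiv.Perm.sign ξb : ℤ)

/-- The coefficient `𝔞_{d,𝔡} = ∑_{σ ∈ C_{t0}, σd ∈ R_{t0} 𝔡 Sym_{α|β}} sgn(σ) ε_𝔡(σ d)`. -/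
noncomputable def coeffA {n : ℕ} {lam : List ℕ} (t0 : Tab n lam) (α β : List ℕ)
    (ε : Sym n → ℤ) (d 𝔡 : Sym n) : ℤ :=
  ∑ σ : Sym n, if σ ∈ colStab t0 ∧ σ * d ∈ dCoset t0 α β 𝔡
    then (Equiv.Perm.sign σ : ℤ) * ε (σ * d) else 0

/-- The multiset of colours in column `j` of `T`. -/
def colMul {lam : List ℕ} (T : Cell lam → Colour) (j : ℕ) : Multiset Colour :=
  (Finset.univ.filter fun c : Cell lam => (c.2 : ℕ) = j).val.map T

noncomputable def sortedCol (m : Multiset Colour) : List Colour := m.sort (· ≤ ·)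

/-- Comparison of column multisets: the sorted lists agree up to position `k`, where
the first is larger. -/
def msGT (m m' : Multiset Colour) : Prop :=
  ∃ k, (∀ s, s < k → (sortedCol m).getD s (cCol 0) = (sortedCol m').getD s (cCol 0)) ∧
    (sortedCol m').getD k (cCol 0) < (sortedCol m).getD k (cCol 0)

/-- The strict column-dominance order `T ⊳ T'`. -/
def TabGT {lam : List ℕ} (T T' : Cell lam → Colour) : Prop :=
  ∃ t, (∀ j, j < t → colMul T j = colMul T' j) ∧ msGT (colMul T t) (colMul T' t)

/-- The column-dominance pre-order `T ⊵ T'`. -/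
def TabGE {lam : List ℕ} (T T' : Cell lam → Colour) : Prop :=
  (∀ j, colMul T j = colMul T' j) ∨ TabGT T T'


/-- Row equivalence of tableaux: same numbers in each row (tabloids are the classes). -/
def rowEquiv (n : ℕ) (lam : List ℕ) (t t' : Tab n lam) : Prop :=
  ∀ a : Fin n, (t.symm a).1 = (t'.symm a).1

def tabSetoid (n : ℕ) (lam : List ℕ) : Setoid (Tab n lam) :=
  ⟨rowEquiv n lam, ⟨fun _ _ => rfl, fun h a => (h a).symm, fun h h' a => (h a).trans (h' a)⟩⟩

/-- Tabloids: row-equivalence classes of `λ`-tableaux; they index a `ℤ`-basis of the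
Young permutation module `M^λ_ℤ`. -/
abbrev Tabloid (n : ℕ) (lam : List ℕ) := Quotient (tabSetoid n lam)

/-- The Young permutation module `M^λ_ℤ`, free on the tabloids. -/
abbrev Mlam (n : ℕ) (lam : List ℕ) := Tabloid n lam →₀ ℤ

/-- The polytabloid `e_t = ∑_{σ ∈ C_t} sgn(σ) (σ · {t})`. -/
noncomputable def eTab (n : ℕ) (lam : List ℕ) (t : Tab n lam) : Mlam n lam :=
  ∑ σ : Sym n, if σ ∈ colStab t then
    (Equiv.Perm.sign σ : ℤ) • Finsupp.single (Quotient.mk (tabSetoid n lam) (t.trans σ)) 1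
  else 0

/-- The map `ψ : ℤ𝒯(λ) → M^λ_ℤ`, `t ↦ e_t` (its image is the Specht module `S^λ_ℤ`). -/
noncomputable def psi (n : ℕ) (lam : List ℕ) : (Tab n lam →₀ ℤ) →ₗ[ℤ] Mlam n lam :=
  Finsupp.linearCombination ℤ (eTab n lam)

/-- Length of the `j`-th column of `[λ]`. -/
def colLen (lam : List ℕ) (j : ℕ) : ℕ := lam.countP (fun x => decide (j < x))

/-- Permutations of the cells supported on the finset `A`. -/
def SymOn (lam : List ℕ) (A : Finset (Cell lam)) : Set (Equiv.Perm (Cell lam)) :=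
  {g | ∀ c, c ∉ A → g c = c}

/-- The subgroup `Sym_X Sym_Y` (as a subset). -/
def prodXY (lam : List ℕ) (X Y : Finset (Cell lam)) : Set (Equiv.Perm (Cell lam)) :=
  {g | ∃ gx ∈ SymOn lam X, ∃ gy ∈ SymOn lam Y, g = gx * gy}

/-- `Δ` is a Garnir transversal: a left transversal of `Sym_X Sym_Y` in `Sym_{X ∪ Y}`,
where `X`, `Y` are nonempty subsets of columns `j < j'` with `|X| + |Y| > |C_j(λ)|`. -/
def IsGarnir (lam : List ℕ) (X Y : Finset (Cell lam))
    (Δ : Finset (Equiv.Perm (Cell lam))) : Prop :=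
  ∃ j j' : ℕ, j < j' ∧ X.Nonempty ∧ Y.Nonempty ∧
    (∀ c ∈ X, (c.2 : ℕ) = j) ∧ (∀ c ∈ Y, (c.2 : ℕ) = j') ∧
    colLen lam j < X.card + Y.card ∧
    (∀ γ ∈ Δ, γ ∈ SymOn lam (X ∪ Y)) ∧
    (∀ g ∈ SymOn lam (X ∪ Y), ∃! δ, δ ∈ Δ ∧ δ⁻¹ * g ∈ prodXY lam X Y)

/-- The conjugate `t ∘ γ ∘ t⁻¹ ∈ Sym n` of a cell permutation `γ`. -/
def conjP (n : ℕ) (lam : List ℕ) (t : Tab n lam) (γ : Equiv.Perm (Cell lam)) : Sym n :=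
  (t.symm.trans γ).trans t

/-- The Garnir element `G^t_Δ · t = ∑_{γ ∈ Δ_t} sgn(γ) (γ · t) ∈ ℤ𝒯(λ)`. -/
noncomputable def garnirElt (n : ℕ) (lam : List ℕ) (t : Tab n lam)
    (Δ : Finset (Equiv.Perm (Cell lam))) : Tab n lam →₀ ℤ :=
  ∑ γ ∈ Δ, (Equiv.Perm.sign (conjP n lam t γ) : ℤ) •
    Finsupp.single (t.trans (conjP n lam t γ)) 1

/-- The set `G` of Garnir elements. -/
def GSet (n : ℕ) (lam : List ℕ) : Set (Tab n lam →₀ ℤ) :=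
  {x | ∃ t : Tab n lam, ∃ X Y : Finset (Cell lam), ∃ Δ : Finset (Equiv.Perm (Cell lam)),
    IsGarnir lam X Y Δ ∧ x = garnirElt n lam t Δ}

/-- The set `H` of elements `π · t - sgn(π) t`, `π ∈ C_t`. -/
def HSet (n : ℕ) (lam : List ℕ) : Set (Tab n lam →₀ ℤ) :=
  {x | ∃ t : Tab n lam, ∃ π ∈ colStab t,
    x = Finsupp.single (t.trans π) 1 - (Equiv.Perm.sign π : ℤ) • Finsupp.single t 1}


/-! ### Auxiliary development -/

section Aux
variable {n : ℕ} {lam : List ℕ}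

lemma perm_apply_inv_self {α : Type*} (σ : Equiv.Perm α) (a : α) : σ (σ⁻¹ a) = a :=
  σ.apply_symm_apply a

lemma perm_inv_apply_self {α : Type*} (σ : Equiv.Perm α) (a : α) : σ⁻¹ (σ a) = a :=
  σ.symm_apply_apply a

lemma sign_mul_self (σ : Sym n) : (Equiv.Perm.sign σ : ℤ) * (Equiv.Perm.sign σ : ℤ) = 1 := by
  rw [← Units.val_mul, Int.units_mul_self]; rfl

lemma conjP_sign (t : Tab n lam) (γ : Equiv.Perm (Cell lam)) :
    Equiv.Perm.sign (conjP n lam t γ) = Equiv.Perm.sign γ :=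
  Equiv.Perm.sign_symm_trans_trans γ t

lemma conjP_mul (t : Tab n lam) (γ δ : Equiv.Perm (Cell lam)) :
    conjP n lam t (γ * δ) = conjP n lam t γ * conjP n lam t δ := by
  ext a; simp [conjP, Equiv.Perm.mul_apply]

lemma conjP_one (t : Tab n lam) : conjP n lam t 1 = 1 := by
  ext a; simp [conjP]

lemma conjP_apply (t : Tab n lam) (γ : Equiv.Perm (Cell lam)) (a : Fin n) :
    conjP n lam t γ a = t (γ (t.symm a)) := rfl

lemma trans_conjP_apply (t : Tab n lam) (γ : Equiv.Perm (Cell lam)) (c : Cell lam) :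
    (t.trans (conjP n lam t γ)) c = t (γ c) := by
  simp [conjP]

/-- membership lemmas for colStab -/
lemma colStab_one (t : Tab n lam) : (1 : Sym n) ∈ colStab t := fun a => rfl

lemma colStab_mul (t : Tab n lam) {σ π : Sym n} (hσ : σ ∈ colStab t) (hπ : π ∈ colStab t) :
    σ * π ∈ colStab t := fun a => by
  simp only [Equiv.Perm.mul_apply]
  have := hσ (π a); rw [this, hπ a]

lemma colStab_inv (t : Tab n lam) {σ : Sym n} (hσ : σ ∈ colStab t) : σ⁻¹ ∈ colStab t := by
  intro a
  have := hσ (σ⁻¹ a)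
  rw [perm_apply_inv_self] at this
  exact this.symm

lemma rowStab_inv (t : Tab n lam) {σ : Sym n} (hσ : σ ∈ rowStab t) : σ⁻¹ ∈ rowStab t := by
  intro a
  have := hσ (σ⁻¹ a)
  rw [perm_apply_inv_self] at this
  exact this.symm

/-- The finset of column-stabilizing permutations. -/
noncomputable def Cfin (t : Tab n lam) : Finset (Sym n) := univ.filter (· ∈ colStab t)

lemma mem_Cfin {t : Tab n lam} {σ : Sym n} : σ ∈ Cfin t ↔ σ ∈ colStab t := by
  simp [Cfin]

lemma eTab_eq_sum (t : Tab n lam) :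
    eTab n lam t = ∑ σ ∈ Cfin t, (Equiv.Perm.sign σ : ℤ) •
      Finsupp.single (Quotient.mk (tabSetoid n lam) (t.trans σ)) 1 := by
  rw [eTab, Cfin, Finset.sum_filter]

/-- Tabloid equality from right multiplication by a row stabilizer element. -/
lemma tabloid_eq_of_rowStab (t : Tab n lam) (ρ r : Sym n) (hr : r ∈ rowStab t) :
    Quotient.mk (tabSetoid n lam) (t.trans (ρ * r)) =
      Quotient.mk (tabSetoid n lam) (t.trans ρ) := by
  apply Quotient.sound
  intro a
  have hr' := rowStab_inv t hr
  show (t.symm ((ρ * r)⁻¹ a)).1 = (t.symm (ρ⁻¹ a)).1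
  rw [mul_inv_rev, Equiv.Perm.mul_apply]
  exact hr' (ρ⁻¹ a)

/-- Left translation reindexing of sums over `Cfin`. -/
lemma sum_Cfin_mul_left {M : Type*} [AddCommMonoid M] (t : Tab n lam) (x : Sym n)
    (hx : x ∈ colStab t) (f : Sym n → M) :
    ∑ σ ∈ Cfin t, f (x * σ) = ∑ σ ∈ Cfin t, f σ := by
  apply Finset.sum_nbij' (fun σ => x * σ) (fun σ => x⁻¹ * σ)
  · intro a ha; rw [mem_Cfin] at *; exact colStab_mul t hx ha
  · intro a ha; rw [mem_Cfin] at *; exact colStab_mul t (colStab_inv t hx) ha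
  · intro a _; group
  · intro a _; group
  · intro a _; rfl

/-- `eTab` of a translated tableau. -/
lemma eTab_trans (t : Tab n lam) (g : Sym n) :
    eTab n lam (t.trans g) = ∑ σ ∈ Cfin t, (Equiv.Perm.sign σ : ℤ) •
      Finsupp.single (Quotient.mk (tabSetoid n lam) (t.trans (g * σ))) 1 := by
  rw [eTab_eq_sum]
  apply Finset.sum_nbij' (fun σ => g⁻¹ * σ * g) (fun τ => g * τ * g⁻¹)
  · intro σ hσ
    rw [mem_Cfin] at *
    intro a
    have := hσ (g a)
    simp only [Equiv.symm_trans_apply] at this ⊢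
    simp only [Equiv.Perm.mul_apply, perm_inv_apply_self] at this ⊢
    convert this using 3 <;> simp
  · intro τ hτ
    rw [mem_Cfin] at *
    intro a
    show ((t.symm (g.symm ((g * τ * g⁻¹) a))).2 : ℕ) = ((t.symm (g.symm a)).2 : ℕ)
    have e : g.symm ((g * τ * g⁻¹) a) = τ (g.symm a) := by
      simp only [Equiv.Perm.mul_apply, Equiv.symm_apply_apply, Equiv.Perm.inv_def]
    rw [e]
    exact hτ (g.symm a)
  · intro a _; group
  · intro a _; group
  · intro σ _
    have h1 : Equiv.Perm.sign (g⁻¹ * σ * g) = Equiv.Perm.sign σ := by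
      simp only [map_mul, map_inv]
      rw [mul_comm (Equiv.Perm.sign g)⁻¹ (Equiv.Perm.sign σ), mul_assoc, inv_mul_cancel,
        mul_one]
    have h2 : t.trans (g * (g⁻¹ * σ * g)) = (t.trans g).trans σ := by
      have h3 : g * (g⁻¹ * σ * g) = σ * g := by group
      rw [h3]; ext c; rfl
    rw [h1, h2]

end Aux

section PartA
variable {n : ℕ} {lam : List ℕ}

lemma colLen_eq_card (j : ℕ) :
    colLen lam j = (univ.filter fun i : Fin lam.length => j < lam.get i).card := by
  have h1 : colLen lam j
      = (List.finRange lam.length).countP (fun i => decide (j < lam.get i)) := by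
    rw [colLen]
    conv_lhs => rw [← List.map_get_finRange lam, List.countP_map]
    rfl
  have h2 : (univ.filter fun i : Fin lam.length => j < lam.get i).card
      = ((List.finRange lam.length).filter (fun i => decide (j < lam.get i))).length := by
    rw [Finset.card_def, Finset.filter_val, Fin.univ_def]
    simp only [Multiset.filter_coe, Multiset.coe_card]
  rw [h1, List.countP_eq_length_filter, h2]

lemma symOn_one (A : Finset (Cell lam)) : (1 : Equiv.Perm (Cell lam)) ∈ SymOn lam A :=
  fun _ _ => rfl

lemma symOn_mul {A : Finset (Cell lam)} {g h : Equiv.Perm (Cell lam)}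
    (hg : g ∈ SymOn lam A) (hh : h ∈ SymOn lam A) : g * h ∈ SymOn lam A := by
  intro c hc
  rw [Equiv.Perm.mul_apply, hh c hc, hg c hc]

lemma symOn_inv {A : Finset (Cell lam)} {g : Equiv.Perm (Cell lam)}
    (hg : g ∈ SymOn lam A) : g⁻¹ ∈ SymOn lam A := by
  intro c hc
  have := hg c hc
  calc g⁻¹ c = g⁻¹ (g c) := by rw [this]
  _ = c := by simp

lemma symOn_maps {A : Finset (Cell lam)} {g : Equiv.Perm (Cell lam)}
    (hg : g ∈ SymOn lam A) {c : Cell lam} (hc : c ∈ A) : g c ∈ A := by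
  by_contra hgc
  have h1 : g (g c) = g c := hg (g c) hgc
  have h2 : g c = c := g.injective h1
  rw [h2] at hgc
  exact hgc hc

lemma symOn_swap {A : Finset (Cell lam)} {c₁ c₂ : Cell lam} (h1 : c₁ ∈ A) (h2 : c₂ ∈ A) :
    Equiv.swap c₁ c₂ ∈ SymOn lam A := by
  intro c hc
  apply Equiv.swap_apply_of_ne_of_ne
  · rintro rfl; exact hc h1
  · rintro rfl; exact hc h2

lemma symOn_mono {A B : Finset (Cell lam)} (hAB : A ⊆ B) :
    SymOn lam A ⊆ SymOn lam B := fun _ hg c hc => hg c (fun h => hc (hAB h))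

lemma symOn_commute {X Y : Finset (Cell lam)} (hd : Disjoint X Y)
    {gx gy : Equiv.Perm (Cell lam)} (hx : gx ∈ SymOn lam X) (hy : gy ∈ SymOn lam Y) :
    gx * gy = gy * gx := by
  apply Equiv.ext; intro c
  simp only [Equiv.Perm.mul_apply]
  by_cases hcX : c ∈ X
  · have hcY : c ∉ Y := Finset.disjoint_left.mp hd hcX
    have h1 : gx c ∈ X := symOn_maps hx hcX
    rw [hy c hcY, hy (gx c) (Finset.disjoint_left.mp hd h1)]
  · by_cases hcY : c ∈ Y
    · have h1 : gy c ∈ Y := symOn_maps hy hcY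
      rw [hx c hcX, hx (gy c) (Finset.disjoint_right.mp hd h1)]
    · have e1 := hx c hcX
      have e2 := hy c hcY
      rw [e2, e1, e2]

lemma prodXY_one (X Y : Finset (Cell lam)) : (1 : Equiv.Perm (Cell lam)) ∈ prodXY lam X Y :=
  ⟨1, symOn_one X, 1, symOn_one Y, (one_mul 1).symm⟩

lemma prodXY_subset_symOn (X Y : Finset (Cell lam)) :
    prodXY lam X Y ⊆ SymOn lam (X ∪ Y) := by
  rintro g ⟨gx, hx, gy, hy, rfl⟩
  exact symOn_mul (symOn_mono Finset.subset_union_left hx)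
    (symOn_mono Finset.subset_union_right hy)

lemma prodXY_mul {X Y : Finset (Cell lam)} (hd : Disjoint X Y)
    {g h : Equiv.Perm (Cell lam)} (hg : g ∈ prodXY lam X Y) (hh : h ∈ prodXY lam X Y) :
    g * h ∈ prodXY lam X Y := by
  obtain ⟨gx, hgx, gy, hgy, rfl⟩ := hg
  obtain ⟨hx, hhx, hy, hhy, rfl⟩ := hh
  refine ⟨gx * hx, symOn_mul hgx hhx, gy * hy, symOn_mul hgy hhy, ?_⟩
  have : gy * hx = hx * gy := (symOn_commute hd hhx hgy).symm
  calc gx * gy * (hx * hy) = gx * (gy * hx) * hy := by group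
  _ = gx * (hx * gy) * hy := by rw [this]
  _ = gx * hx * (gy * hy) := by group

lemma prodXY_inv {X Y : Finset (Cell lam)} (hd : Disjoint X Y)
    {g : Equiv.Perm (Cell lam)} (hg : g ∈ prodXY lam X Y) : g⁻¹ ∈ prodXY lam X Y := by
  obtain ⟨gx, hgx, gy, hgy, rfl⟩ := hg
  refine ⟨gx⁻¹, symOn_inv hgx, gy⁻¹, symOn_inv hgy, ?_⟩
  rw [mul_inv_rev]
  exact (symOn_commute hd (symOn_inv hgx) (symOn_inv hgy)).symm

/-- Members of `Sym_X` with `X` inside one column preserve columns. -/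
lemma symOn_colPres {X : Finset (Cell lam)} {j : ℕ} (hX : ∀ c ∈ X, (c.2 : ℕ) = j)
    {g : Equiv.Perm (Cell lam)} (hg : g ∈ SymOn lam X) (c : Cell lam) :
    ((g c).2 : ℕ) = (c.2 : ℕ) := by
  by_cases hc : c ∈ X
  · rw [hX c hc, hX (g c) (symOn_maps hg hc)]
  · rw [hg c hc]

lemma prodXY_colPres {X Y : Finset (Cell lam)} {j j' : ℕ}
    (hX : ∀ c ∈ X, (c.2 : ℕ) = j) (hY : ∀ c ∈ Y, (c.2 : ℕ) = j')
    {g : Equiv.Perm (Cell lam)} (hg : g ∈ prodXY lam X Y) (c : Cell lam) :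
    ((g c).2 : ℕ) = (c.2 : ℕ) := by
  obtain ⟨gx, hgx, gy, hgy, rfl⟩ := hg
  rw [Equiv.Perm.mul_apply, symOn_colPres hX hgx (gy c), symOn_colPres hY hgy c]

/-- Column-preserving cell permutations conjugate into the column stabilizer. -/
lemma conjP_mem_colStab (t : Tab n lam) {γ : Equiv.Perm (Cell lam)}
    (hγ : ∀ c, ((γ c).2 : ℕ) = (c.2 : ℕ)) : conjP n lam t γ ∈ colStab t := by
  intro a
  show ((t.symm (t (γ (t.symm a)))).2 : ℕ) = ((t.symm a).2 : ℕ)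
  rw [Equiv.symm_apply_apply]
  exact hγ (t.symm a)

lemma psi_single (u : Tab n lam) :
    psi n lam (Finsupp.single u 1) = eTab n lam u := by
  rw [psi, Finsupp.linearCombination_single, one_smul]

lemma eTab_trans_colStab (t : Tab n lam) (π : Sym n) (hπ : π ∈ colStab t) :
    eTab n lam (t.trans π) = (Equiv.Perm.sign π : ℤ) • eTab n lam t := by
  rw [eTab_trans, eTab_eq_sum, Finset.smul_sum]
  rw [← sum_Cfin_mul_left t π hπ (fun ρ => (Equiv.Perm.sign π : ℤ) •
    ((Equiv.Perm.sign ρ : ℤ) • Finsupp.single (Quotient.mk (tabSetoid n lam) (t.trans ρ)) (1:ℤ)))]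
  apply Finset.sum_congr rfl
  intro σ _
  rw [smul_smul]
  congr 1
  rw [map_mul, Units.val_mul, ← mul_assoc, sign_mul_self, one_mul]

lemma psi_HSet : ∀ x ∈ HSet n lam, psi n lam x = 0 := by
  rintro x ⟨t, π, hπ, rfl⟩
  rw [map_sub, map_smul, psi_single, psi_single, eTab_trans_colStab t π hπ, sub_self]

/-- Partial sum term used in the Garnir computation. -/
noncomputable def TermOf (t : Tab n lam) (γ : Equiv.Perm (Cell lam)) : Mlam n lam :=
  ∑ σ ∈ Cfin t, ((Equiv.Perm.sign γ : ℤ) * (Equiv.Perm.sign σ : ℤ)) •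
    Finsupp.single (Quotient.mk (tabSetoid n lam) (t.trans (conjP n lam t γ * σ))) 1

lemma psi_garnir_eq_sum_TermOf (t : Tab n lam) (Δ : Finset (Equiv.Perm (Cell lam))) :
    psi n lam (garnirElt n lam t Δ) = ∑ γ ∈ Δ, TermOf t γ := by
  rw [garnirElt, map_sum]
  apply Finset.sum_congr rfl
  intro γ _
  rw [map_smul, psi_single, eTab_trans t (conjP n lam t γ), TermOf, Finset.smul_sum]
  apply Finset.sum_congr rfl
  intro σ _
  rw [smul_smul, conjP_sign]

lemma TermOf_mul_colPres (t : Tab n lam) (γ p : Equiv.Perm (Cell lam))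
    (hp : ∀ c, ((p c).2 : ℕ) = (c.2 : ℕ)) :
    TermOf t (γ * p) = TermOf t γ := by
  have hmem := conjP_mem_colStab t hp
  rw [TermOf, TermOf, ← sum_Cfin_mul_left t (conjP n lam t p) hmem
    (fun ρ => ((Equiv.Perm.sign γ : ℤ) * (Equiv.Perm.sign ρ : ℤ)) •
      Finsupp.single (Quotient.mk (tabSetoid n lam) (t.trans (conjP n lam t γ * ρ))) (1:ℤ))]
  apply Finset.sum_congr rfl
  intro σ _
  have hsign : ((Equiv.Perm.sign (γ * p) : ℤ) * (Equiv.Perm.sign σ : ℤ))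
      = (Equiv.Perm.sign γ : ℤ) * (Equiv.Perm.sign (conjP n lam t p * σ) : ℤ) := by
    rw [map_mul, Units.val_mul, map_mul, Units.val_mul, conjP_sign]
    ring
  have harg : t.trans (conjP n lam t (γ * p) * σ)
      = t.trans (conjP n lam t γ * (conjP n lam t p * σ)) := by
    rw [conjP_mul, mul_assoc]
  rw [hsign, harg]

end PartA

section PartA2
variable {n : ℕ} {lam : List ℕ}

lemma garnir_disjoint {X Y : Finset (Cell lam)} {j j' : ℕ} (hjj : j < j')
    (hX : ∀ c ∈ X, (c.2 : ℕ) = j) (hY : ∀ c ∈ Y, (c.2 : ℕ) = j') : Disjoint X Y := by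
  rw [Finset.disjoint_left]
  intro c hcX hcY
  exact absurd ((hX c hcX).symm.trans (hY c hcY)) hjj.ne

lemma garnir_pigeonhole (t : Tab n lam) {X Y : Finset (Cell lam)} {j j' : ℕ} (hjj : j < j')
    (hX : ∀ c ∈ X, (c.2 : ℕ) = j) (hY : ∀ c ∈ Y, (c.2 : ℕ) = j')
    (hcard : colLen lam j < X.card + Y.card) (σ : Sym n) (hσ : σ ∈ colStab t) :
    ∃ c₁ ∈ X ∪ Y, ∃ c₂ ∈ X ∪ Y, c₁ ≠ c₂ ∧
      (t.symm (σ⁻¹ (t c₁))).1 = (t.symm (σ⁻¹ (t c₂))).1 := by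
  have hdisj : Disjoint X Y := garnir_disjoint hjj hX hY
  have hcardU : X.card + Y.card = (X ∪ Y).card := (Finset.card_union_of_disjoint hdisj).symm
  have hmaps : ∀ c ∈ X ∪ Y,
      (t.symm (σ⁻¹ (t c))).1 ∈ univ.filter (fun i : Fin lam.length => j < lam.get i) := by
    intro c hc
    have hσ' := colStab_inv t hσ
    have hcol : ((t.symm (σ⁻¹ (t c))).2 : ℕ) = (c.2 : ℕ) := by
      have := hσ' (t c)
      rwa [Equiv.symm_apply_apply] at this
    have hjc : j ≤ (c.2 : ℕ) := by
      rcases Finset.mem_union.mp hc with h | h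
      · rw [hX c h]
      · rw [hY c h]; exact hjj.le
    have hlt : ((t.symm (σ⁻¹ (t c))).2 : ℕ) < lam.get (t.symm (σ⁻¹ (t c))).1 :=
      (t.symm (σ⁻¹ (t c))).2.isLt
    refine Finset.mem_filter.mpr ⟨Finset.mem_univ _, ?_⟩
    omega
  have hlt : (univ.filter (fun i : Fin lam.length => j < lam.get i)).card < (X ∪ Y).card := by
    rw [← colLen_eq_card, ← hcardU]; exact hcard
  obtain ⟨c₁, h1, c₂, h2, hne, heq⟩ := Finset.exists_ne_map_eq_of_card_lt_of_maps_to hlt hmaps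
  exact ⟨c₁, h1, c₂, h2, hne, heq⟩

lemma inner_vanish (t : Tab n lam) {X Y : Finset (Cell lam)} {j j' : ℕ} (hjj : j < j')
    (hX : ∀ c ∈ X, (c.2 : ℕ) = j) (hY : ∀ c ∈ Y, (c.2 : ℕ) = j')
    (hcard : colLen lam j < X.card + Y.card) (σ : Sym n) (hσ : σ ∈ colStab t) :
    ∑ g ∈ univ.filter (· ∈ SymOn lam (X ∪ Y)),
      ((Equiv.Perm.sign g : ℤ) * (Equiv.Perm.sign σ : ℤ)) •
        Finsupp.single (Quotient.mk (tabSetoid n lam) (t.trans (conjP n lam t g * σ))) (1:ℤ)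
      = 0 := by
  obtain ⟨c₁, hc₁, c₂, hc₂, hne, hrow⟩ := garnir_pigeonhole t hjj hX hY hcard σ hσ
  set τ : Equiv.Perm (Cell lam) := Equiv.swap c₁ c₂ with hτ
  have hτS : τ ∈ SymOn lam (X ∪ Y) := symOn_swap hc₁ hc₂
  have hr : (σ⁻¹ * conjP n lam t τ * σ) ∈ rowStab t := by
    intro a
    show (t.symm ((σ⁻¹ * conjP n lam t τ * σ) a)).1 = (t.symm a).1
    have happ : (σ⁻¹ * conjP n lam t τ * σ) a = σ⁻¹ (t (τ (t.symm (σ a)))) := by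
      simp [Equiv.Perm.mul_apply, conjP_apply]
    rw [happ]
    by_cases h1 : t.symm (σ a) = c₁
    · have : τ (t.symm (σ a)) = c₂ := by rw [h1, hτ, Equiv.swap_apply_left]
      rw [this, ← hrow]
      have hσa : t c₁ = σ a := by rw [← h1, Equiv.apply_symm_apply]
      rw [hσa, perm_inv_apply_self]
    · by_cases h2 : t.symm (σ a) = c₂
      · have : τ (t.symm (σ a)) = c₁ := by rw [h2, hτ, Equiv.swap_apply_right]
        rw [this, hrow]
        have hσa : t c₂ = σ a := by rw [← h2, Equiv.apply_symm_apply]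
        rw [hσa, perm_inv_apply_self]
      · have : τ (t.symm (σ a)) = t.symm (σ a) := Equiv.swap_apply_of_ne_of_ne h1 h2
        rw [this, Equiv.apply_symm_apply, perm_inv_apply_self]
  apply Finset.sum_involution (fun g _ => g * τ)
  · intro g hg
    have hkey : conjP n lam t (g * τ) * σ = (conjP n lam t g * σ) * (σ⁻¹ * conjP n lam t τ * σ) := by
      rw [conjP_mul]; group
    have htab : Quotient.mk (tabSetoid n lam) (t.trans (conjP n lam t (g * τ) * σ))
        = Quotient.mk (tabSetoid n lam) (t.trans (conjP n lam t g * σ)) := by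
      rw [hkey]
      exact tabloid_eq_of_rowStab t _ _ hr
    have hsign : (Equiv.Perm.sign (g * τ) : ℤ) = -(Equiv.Perm.sign g : ℤ) := by
      rw [map_mul, Units.val_mul, hτ, Equiv.Perm.sign_swap hne]
      simp
    rw [htab, hsign, ← add_smul]
    ring_nf
    simp
  · intro g _ _
    intro h
    have : τ = 1 := mul_left_cancel (a := g) (by rw [mul_one]; exact h)
    rw [hτ, Equiv.swap_eq_one_iff] at this
    exact hne this
  · intro g hg
    rw [Finset.mem_filter] at hg ⊢
    exact ⟨Finset.mem_univ _, symOn_mul hg.2 hτS⟩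
  · intro g _
    rw [mul_assoc, hτ, Equiv.swap_mul_self, mul_one]

lemma psi_GSet : ∀ x ∈ GSet n lam, psi n lam x = 0 := by
  rintro x ⟨t, X, Y, Δ, ⟨j, j', hjj, hXne, hYne, hX, hY, hcard, hΔS, htrans⟩, rfl⟩
  classical
  have hdisj : Disjoint X Y := garnir_disjoint hjj hX hY
  set Sfin : Finset (Equiv.Perm (Cell lam)) := univ.filter (· ∈ SymOn lam (X ∪ Y)) with hSfin
  set Pfin : Finset (Equiv.Perm (Cell lam)) := univ.filter (· ∈ prodXY lam X Y) with hPfin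
  choose rep hrep using fun g (hg : g ∈ SymOn lam (X ∪ Y)) => htrans g hg
  set rep' : Equiv.Perm (Cell lam) → Equiv.Perm (Cell lam) :=
    fun g => if hg : g ∈ SymOn lam (X ∪ Y) then rep g hg else 1 with hrep'
  have hrepP : ∀ g (hg : g ∈ SymOn lam (X ∪ Y)),
      rep' g ∈ Δ ∧ (rep' g)⁻¹ * g ∈ prodXY lam X Y := by
    intro g hg
    simp only [hrep', dif_pos hg]
    exact (hrep g hg).1
  have hrepU : ∀ g (hg : g ∈ SymOn lam (X ∪ Y)) (δ : Equiv.Perm (Cell lam)),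
      δ ∈ Δ → δ⁻¹ * g ∈ prodXY lam X Y → δ = rep' g := by
    intro g hg δ h1 h2
    simp only [hrep', dif_pos hg]
    exact (hrep g hg).2 δ ⟨h1, h2⟩
  -- the full sum equals |Pfin| • ψ(garnir)
  have key : ∑ g ∈ Sfin, TermOf t g = Pfin.card • psi n lam (garnirElt n lam t Δ) := by
    have hbij : ∑ g ∈ Sfin, TermOf t g = ∑ x ∈ Δ ×ˢ Pfin, TermOf t (x.1 * x.2) := by
      apply Finset.sum_nbij' (fun g => (rep' g, (rep' g)⁻¹ * g)) (fun x => x.1 * x.2)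
      · intro g hg
        rw [hSfin, Finset.mem_filter] at hg
        obtain ⟨hrΔ, hrP⟩ := hrepP g hg.2
        rw [Finset.mem_product]
        exact ⟨hrΔ, Finset.mem_filter.mpr ⟨Finset.mem_univ _, hrP⟩⟩
      · intro x hx
        rw [Finset.mem_product] at hx
        rw [hSfin, Finset.mem_filter]
        refine ⟨Finset.mem_univ _, symOn_mul (hΔS _ hx.1) ?_⟩
        exact prodXY_subset_symOn X Y (Finset.mem_filter.mp hx.2).2
      · intro g hg
        rw [hSfin, Finset.mem_filter] at hg
        simp only
        group
      · intro x hx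
        rw [Finset.mem_product] at hx
        have hxS : x.1 * x.2 ∈ SymOn lam (X ∪ Y) :=
          symOn_mul (hΔS _ hx.1) (prodXY_subset_symOn X Y (Finset.mem_filter.mp hx.2).2)
        have := hrepU (x.1 * x.2) hxS x.1 hx.1 (by
          have : x.1⁻¹ * (x.1 * x.2) = x.2 := by group
          rw [this]
          exact (Finset.mem_filter.mp hx.2).2)
        have h2 : (rep' (x.1 * x.2))⁻¹ * (x.1 * x.2) = x.2 := by
          rw [← this]; group
        exact Prod.ext this.symm h2
      · intro g hg
        congr 1
        rw [hSfin, Finset.mem_filter] at hg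
        group
    rw [hbij, Finset.sum_product]
    have hconst : ∀ δ ∈ Δ, ∑ p ∈ Pfin, TermOf t (δ * p) = Pfin.card • TermOf t δ := by
      intro δ _
      rw [Finset.sum_congr rfl (fun p hp => ?_), Finset.sum_const]
      exact TermOf_mul_colPres t δ p (prodXY_colPres hX hY (Finset.mem_filter.mp hp).2)
    rw [Finset.sum_congr rfl hconst, ← Finset.smul_sum, psi_garnir_eq_sum_TermOf]
  -- the full sum vanishes
  have hzero : ∑ g ∈ Sfin, TermOf t g = 0 := by
    rw [Finset.sum_congr rfl (fun g _ => rfl : ∀ g ∈ Sfin, TermOf t g = TermOf t g)]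
    have : ∑ g ∈ Sfin, TermOf t g = ∑ σ ∈ Cfin t, ∑ g ∈ Sfin,
        ((Equiv.Perm.sign g : ℤ) * (Equiv.Perm.sign σ : ℤ)) •
          Finsupp.single (Quotient.mk (tabSetoid n lam) (t.trans (conjP n lam t g * σ))) (1:ℤ) := by
      rw [Finset.sum_comm]
      rfl
    rw [this]
    apply Finset.sum_eq_zero
    intro σ hσ
    exact inner_vanish t hjj hX hY hcard σ (mem_Cfin.mp hσ)
  rw [key] at hzero
  have hPpos : 0 < Pfin.card :=
    Finset.card_pos.mpr ⟨1, Finset.mem_filter.mpr ⟨Finset.mem_univ _, prodXY_one X Y⟩⟩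
  ext q
  have happ := DFunLike.congr_fun hzero q
  rw [Finsupp.smul_apply] at happ
  have : (Pfin.card : ℤ) * (psi n lam (garnirElt n lam t Δ)) q = 0 := by
    rw [← nsmul_eq_mul]
    exact happ
  rcases mul_eq_zero.mp this with h | h
  · exact absurd (Int.natCast_eq_zero.mp h) hPpos.ne'
  · exact h

end PartA2

section PartB1
variable {n : ℕ} {lam : List ℕ}

lemma cellEq {c c' : Cell lam} (h1 : c.1 = c'.1) (h2 : (c.2 : ℕ) = (c'.2 : ℕ)) : c = c' := by
  rcases c with ⟨i, k⟩
  rcases c' with ⟨i', k'⟩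
  cases h1
  simp only [Sigma.mk.inj_iff, heq_eq_eq, true_and]
  exact Fin.ext h2

/-- Column-increasing tableau. -/
def ColInc (t : Tab n lam) : Prop :=
  ∀ c c' : Cell lam, (c.2 : ℕ) = (c'.2 : ℕ) → c.1 < c'.1 → t c < t c'

noncomputable def m1 (t : Tab n lam) : ℕ := ∑ c : Cell lam, (c.2 : ℕ) * (t c : ℕ)

noncomputable def m2 (t : Tab n lam) : ℕ := ∑ c : Cell lam, (c.1 : ℕ) * (t c : ℕ)

/-- a bound for both measures -/
noncomputable def mB (n : ℕ) (lam : List ℕ) : ℕ :=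
  Fintype.card (Cell lam) * ((lam.length + lam.sum) * n)

lemma m1_le (t : Tab n lam) : m1 t ≤ mB n lam := by
  have h : ∀ c ∈ (univ : Finset (Cell lam)), (c.2 : ℕ) * (t c : ℕ) ≤ (lam.length + lam.sum) * n := by
    intro c _
    apply Nat.mul_le_mul
    · have h1 : (c.2 : ℕ) < lam.get c.1 := c.2.isLt
      have h2 : lam.get c.1 ≤ lam.sum :=
        List.single_le_sum (fun x _ => Nat.zero_le x) _ (lam.get_mem c.1)
      omega
    · exact (t c).isLt.le
  have := Finset.sum_le_card_nsmul univ _ _ h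
  rw [smul_eq_mul] at this
  simpa [mB, m1] using this

lemma m2_le (t : Tab n lam) : m2 t ≤ mB n lam := by
  have h : ∀ c ∈ (univ : Finset (Cell lam)), (c.1 : ℕ) * (t c : ℕ) ≤ (lam.length + lam.sum) * n := by
    intro c _
    apply Nat.mul_le_mul
    · have h1 : (c.1 : ℕ) < lam.length := c.1.isLt
      omega
    · exact (t c).isLt.le
  have := Finset.sum_le_card_nsmul univ _ _ h
  rw [smul_eq_mul] at this
  simpa [mB, m2] using this

/-- Combined termination measure. -/
noncomputable def MM (t : Tab n lam) : ℕ :=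
  (mB n lam - m1 t) * (mB n lam + 1) + (mB n lam - m2 t)

lemma MM_lt_of_m1 {t t' : Tab n lam} (h : m1 t < m1 t') : MM t' < MM t := by
  have h1 := m1_le t'
  have h2 := m2_le t
  have h3 := m2_le t'
  rw [MM, MM]
  set B := mB n lam
  have ha : B - m1 t' ≤ (B - m1 t) - 1 := by omega
  have hb : (B - m1 t') * (B + 1) ≤ ((B - m1 t) - 1) * (B + 1) :=
    Nat.mul_le_mul_right _ ha
  have hc : ((B - m1 t) - 1) * (B + 1) + (B + 1) = ((B - m1 t) - 1 + 1) * (B + 1) := by ring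
  have hd : (B - m1 t) - 1 + 1 = B - m1 t := by omega
  have he : (B - m1 t') * (B + 1) + (B - m2 t') < (B - m1 t) * (B + 1) := by
    calc (B - m1 t') * (B + 1) + (B - m2 t') ≤ ((B - m1 t) - 1) * (B + 1) + B := by
          exact Nat.add_le_add hb (by omega)
    _ < ((B - m1 t) - 1) * (B + 1) + (B + 1) := by omega
    _ = (B - m1 t) * (B + 1) := by rw [hc, hd]
  omega

lemma MM_lt_of_m2 {t t' : Tab n lam} (h1 : m1 t' = m1 t) (h2 : m2 t < m2 t') : MM t' < MM t := by
  have h3 := m2_le t'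
  rw [MM, MM, h1]
  omega

lemma m1_trans (t : Tab n lam) (γ : Equiv.Perm (Cell lam)) :
    m1 (t.trans (conjP n lam t γ)) = ∑ c : Cell lam, ((γ⁻¹ c).2 : ℕ) * (t c : ℕ) := by
  rw [m1]
  have h : ∀ c : Cell lam, ((c.2 : ℕ) * ((t.trans (conjP n lam t γ)) c : ℕ))
      = (((γ⁻¹ (γ c)).2 : ℕ) * (t (γ c) : ℕ)) := by
    intro c
    rw [trans_conjP_apply, perm_inv_apply_self]
  rw [Finset.sum_congr rfl (fun c _ => h c)]
  exact Equiv.sum_comp γ (fun c => ((γ⁻¹ c).2 : ℕ) * (t c : ℕ))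

lemma m2_trans (t : Tab n lam) (γ : Equiv.Perm (Cell lam)) :
    m2 (t.trans (conjP n lam t γ)) = ∑ c : Cell lam, ((γ⁻¹ c).1 : ℕ) * (t c : ℕ) := by
  rw [m2]
  have h : ∀ c : Cell lam, ((c.1 : ℕ) * ((t.trans (conjP n lam t γ)) c : ℕ))
      = (((γ⁻¹ (γ c)).1 : ℕ) * (t (γ c) : ℕ)) := by
    intro c
    rw [trans_conjP_apply, perm_inv_apply_self]
  rw [Finset.sum_congr rfl (fun c _ => h c)]
  exact Equiv.sum_comp γ (fun c => ((γ⁻¹ c).1 : ℕ) * (t c : ℕ))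

lemma m1_trans_colPres (t : Tab n lam) {γ : Equiv.Perm (Cell lam)}
    (hγ : ∀ c, ((γ c).2 : ℕ) = (c.2 : ℕ)) :
    m1 (t.trans (conjP n lam t γ)) = m1 t := by
  rw [m1_trans, m1]
  apply Finset.sum_congr rfl
  intro c _
  congr 1
  have := hγ (γ⁻¹ c)
  rw [perm_apply_inv_self] at this
  exact this.symm

lemma swap_colPres {c c' : Cell lam} (h : (c.2 : ℕ) = (c'.2 : ℕ)) (d : Cell lam) :
    (((Equiv.swap c c') d).2 : ℕ) = (d.2 : ℕ) := by
  rcases eq_or_ne d c with rfl | h1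
  · rw [Equiv.swap_apply_left]; omega
  · rcases eq_or_ne d c' with rfl | h2
    · rw [Equiv.swap_apply_right]; omega
    · rw [Equiv.swap_apply_of_ne_of_ne h1 h2]

lemma m2_swap_lt (t : Tab n lam) {c c' : Cell lam} (hrow : c.1 < c'.1)
    (hval : (t c' : ℕ) < (t c : ℕ)) :
    m2 t < m2 (t.trans (conjP n lam t (Equiv.swap c c'))) := by
  have hne : c ≠ c' := by rintro rfl; exact lt_irrefl _ hrow
  rw [m2_trans, m2]
  have hc'u : c' ∈ (univ : Finset (Cell lam)).erase c :=
    Finset.mem_erase.mpr ⟨hne.symm, Finset.mem_univ _⟩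
  have split : ∀ f : Cell lam → ℕ, ∑ d : Cell lam, f d
      = f c + (f c' + ∑ d ∈ ((univ : Finset (Cell lam)).erase c).erase c', f d) := by
    intro f
    rw [Finset.add_sum_erase _ f hc'u, Finset.add_sum_erase _ f (Finset.mem_univ c)]
  rw [split (fun d => (d.1 : ℕ) * (t d : ℕ)),
    split (fun d => (((Equiv.swap c c')⁻¹ d).1 : ℕ) * (t d : ℕ))]
  have e1 : ((Equiv.swap c c')⁻¹ c) = c' := by
    rw [Equiv.swap_inv, Equiv.swap_apply_left]
  have e2 : ((Equiv.swap c c')⁻¹ c') = c := by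
    rw [Equiv.swap_inv, Equiv.swap_apply_right]
  have e3 : ∀ d ∈ ((univ : Finset (Cell lam)).erase c).erase c',
      (((Equiv.swap c c')⁻¹ d).1 : ℕ) * (t d : ℕ) = (d.1 : ℕ) * (t d : ℕ) := by
    intro d hd
    rw [Finset.mem_erase, Finset.mem_erase] at hd
    rw [Equiv.swap_inv, Equiv.swap_apply_of_ne_of_ne hd.2.1 hd.1]
  rw [Finset.sum_congr rfl e3, e1, e2]
  have hr : (c.1 : ℕ) < (c'.1 : ℕ) := hrow
  have key : (c.1 : ℕ) * (t c : ℕ) + (c'.1 : ℕ) * (t c' : ℕ)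
      < (c'.1 : ℕ) * (t c : ℕ) + (c.1 : ℕ) * (t c' : ℕ) := by
    nlinarith
  omega

end PartB1

section PartB2
variable {n : ℕ} {lam : List ℕ}

lemma mem_prodXY_of_maps {X Y : Finset (Cell lam)} {h : Equiv.Perm (Cell lam)}
    (hS : h ∈ SymOn lam (X ∪ Y)) (hXX : ∀ c ∈ X, h c ∈ X) (hYY : ∀ c ∈ Y, h c ∈ Y) :
    h ∈ prodXY lam X Y := by
  classical
  have hYinv : ∀ c ∈ Y, h⁻¹ c ∈ Y := by
    intro c hc
    have himg : Y.image h = Y := by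
      apply Finset.eq_of_subset_of_card_le
      · intro d hd
        obtain ⟨e, he, rfl⟩ := Finset.mem_image.mp hd
        exact hYY e he
      · rw [Finset.card_image_of_injective _ h.injective]
    rw [← himg] at hc
    obtain ⟨e, he, hee⟩ := Finset.mem_image.mp hc
    have : h⁻¹ c = e := by rw [← hee]; simp
    rw [this]; exact he
  set gy : Equiv.Perm (Cell lam) :=
    { toFun := fun c => if c ∈ Y then h c else c
      invFun := fun c => if c ∈ Y then h⁻¹ c else c
      left_inv := by
        intro c
        by_cases hc : c ∈ Y
        · simp only [if_pos hc, if_pos (hYY c hc)]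
          simp
        · simp only [if_neg hc]
      right_inv := by
        intro c
        by_cases hc : c ∈ Y
        · simp only [if_pos hc, if_pos (hYinv c hc)]
          simp
        · simp only [if_neg hc] } with hgy
  have hgymem : gy ∈ SymOn lam Y := by
    intro c hc
    show (if c ∈ Y then h c else c) = c
    rw [if_neg hc]
  have hgyinv : ∀ c : Cell lam, gy⁻¹ c = if c ∈ Y then h⁻¹ c else c := fun c => rfl
  refine ⟨h * gy⁻¹, ?_, gy, hgymem, by group⟩
  intro c hc
  rw [Equiv.Perm.mul_apply, hgyinv]
  by_cases hcY : c ∈ Y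
  · rw [if_pos hcY]; simp
  · rw [if_neg hcY]
    exact hS c (by
      rw [Finset.mem_union]
      rintro (h1 | h1)
      exacts [hc h1, hcY h1])

lemma m1_garnir_lt (t : Tab n lam) {X Y : Finset (Cell lam)} {j : ℕ}
    (hX : ∀ c ∈ X, (c.2 : ℕ) = j) (hY : ∀ c ∈ Y, (c.2 : ℕ) = j + 1)
    {v : ℕ} (hXv : ∀ c ∈ X, v < (t c : ℕ)) (hYv : ∀ c ∈ Y, (t c : ℕ) ≤ v)
    {γ : Equiv.Perm (Cell lam)} (hγS : γ ∈ SymOn lam (X ∪ Y))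
    (hγP : γ ∉ prodXY lam X Y) : m1 t < m1 (t.trans (conjP n lam t γ)) := by
  classical
  have hdisj : Disjoint X Y := garnir_disjoint (Nat.lt_succ_self j) hX hY
  have hinv : γ⁻¹ ∈ SymOn lam (X ∪ Y) := symOn_inv hγS
  set K1 : Finset (Cell lam) := X.filter (fun d => γ⁻¹ d ∈ Y) with hK1
  set K2 : Finset (Cell lam) := Y.filter (fun d => γ⁻¹ d ∈ X) with hK2
  set A : Finset (Cell lam) := X.filter (fun d => γ⁻¹ d ∈ X) with hA
  -- membership dichotomy on X and Y
  have hXdich : ∀ d ∈ X, (γ⁻¹ d ∈ X ∧ γ⁻¹ d ∉ Y) ∨ (γ⁻¹ d ∈ Y ∧ γ⁻¹ d ∉ X) := by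
    intro d hd
    have : γ⁻¹ d ∈ X ∪ Y := symOn_maps hinv (Finset.mem_union_left _ hd)
    rcases Finset.mem_union.mp this with h1 | h1
    · exact Or.inl ⟨h1, Finset.disjoint_left.mp hdisj h1⟩
    · exact Or.inr ⟨h1, Finset.disjoint_right.mp hdisj h1⟩
  have hYdich : ∀ d ∈ Y, (γ⁻¹ d ∈ X ∧ γ⁻¹ d ∉ Y) ∨ (γ⁻¹ d ∈ Y ∧ γ⁻¹ d ∉ X) := by
    intro d hd
    have : γ⁻¹ d ∈ X ∪ Y := symOn_maps hinv (Finset.mem_union_right _ hd)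
    rcases Finset.mem_union.mp this with h1 | h1
    · exact Or.inl ⟨h1, Finset.disjoint_left.mp hdisj h1⟩
    · exact Or.inr ⟨h1, Finset.disjoint_right.mp hdisj h1⟩
  -- card equalities
  have hK1' : K1 = X.filter (fun d => ¬ (γ⁻¹ d ∈ X)) := by
    rw [hK1]
    apply Finset.filter_congr
    intro d hd
    rcases hXdich d hd with ⟨h1, h2⟩ | ⟨h1, h2⟩
    · simp only [h1, h2, not_true_eq_false, not_false_eq_true, iff_self]
    · simp only [h1, h2, not_true_eq_false, not_false_eq_true, iff_self]
  have hcards : A.card + K1.card = X.card := by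
    rw [hA, hK1']
    exact Finset.card_filter_add_card_filter_not (p := fun d => γ⁻¹ d ∈ X)
  have hcards2 : A.card + K2.card = X.card := by
    have hbij : ((X ∪ Y).filter (fun d => γ⁻¹ d ∈ X)).card = X.card := by
      apply Finset.card_bij (fun d _ => γ⁻¹ d)
      · intro a ha; exact (Finset.mem_filter.mp ha).2
      · intro a _ b _ hab; exact (γ⁻¹).injective hab
      · intro b hb
        refine ⟨γ b, Finset.mem_filter.mpr ⟨symOn_maps hγS (Finset.mem_union_left _ hb), ?_⟩, ?_⟩
        · rw [perm_inv_apply_self]; exact hb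
        · rw [perm_inv_apply_self]
    rw [Finset.filter_union, Finset.card_union_of_disjoint
      (hdisj.mono (Finset.filter_subset _ _) (Finset.filter_subset _ _))] at hbij
    rw [hA, hK2]
    exact hbij
  have hKcard : K1.card = K2.card := by omega
  have hK1ne : K1.Nonempty := by
    rw [Finset.nonempty_iff_ne_empty]
    intro hne
    have hK1c : K1.card = 0 := by rw [hne]; rfl
    have hK2c : K2.card = 0 := by omega
    rw [Finset.card_eq_zero] at hK2c
    have hXX : ∀ c ∈ X, γ⁻¹ c ∈ X := by
      intro c hc
      rcases hXdich c hc with ⟨h1, _⟩ | ⟨h1, _⟩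
      · exact h1
      · exact absurd (hK1 ▸ Finset.mem_filter.mpr ⟨hc, h1⟩ : c ∈ K1) (by rw [hne]; simp)
    have hYY : ∀ c ∈ Y, γ⁻¹ c ∈ Y := by
      intro c hc
      rcases hYdich c hc with ⟨h1, _⟩ | ⟨h1, _⟩
      · exact absurd (hK2 ▸ Finset.mem_filter.mpr ⟨hc, h1⟩ : c ∈ K2) (by rw [hK2c]; simp)
      · exact h1
    have hmem : γ⁻¹ ∈ prodXY lam X Y := mem_prodXY_of_maps hinv hXX hYY
    have hmem2 : γ ∈ prodXY lam X Y := by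
      have := prodXY_inv hdisj hmem
      rwa [inv_inv] at this
    exact hγP hmem2
  -- the signed difference of measures
  set F : Cell lam → ℤ := fun d => (((γ⁻¹ d).2 : ℕ) : ℤ) * ((t d : ℕ) : ℤ)
    - ((d.2 : ℕ) : ℤ) * ((t d : ℕ) : ℤ) with hF
  have claim1 : (m1 (t.trans (conjP n lam t γ)) : ℤ) - (m1 t : ℤ) = ∑ d : Cell lam, F d := by
    rw [m1_trans, m1]
    push_cast
    rw [← Finset.sum_sub_distrib]
  have claim2 : ∑ d : Cell lam, F d = ∑ d ∈ X ∪ Y, F d := by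
    symm
    apply Finset.sum_subset (Finset.subset_univ (X ∪ Y))
    intro d _ hd
    rw [hF]
    simp only
    rw [hinv d hd]
    ring
  have claim4 : ∑ d ∈ X, F d = ∑ d ∈ K1, ((t d : ℕ) : ℤ) := by
    rw [← Finset.sum_filter_add_sum_filter_not X (fun d => γ⁻¹ d ∈ Y) F, ← hK1]
    have e1 : ∀ d ∈ K1, F d = ((t d : ℕ) : ℤ) := by
      intro d hd
      rw [hK1, Finset.mem_filter] at hd
      rw [hF]
      simp only
      rw [hY _ hd.2, hX _ hd.1]
      push_cast
      ring
    have e2 : ∀ d ∈ X.filter (fun d => ¬ (γ⁻¹ d ∈ Y)), F d = 0 := by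
      intro d hd
      rw [Finset.mem_filter] at hd
      have h1 : γ⁻¹ d ∈ X := by
        rcases hXdich d hd.1 with ⟨h1, _⟩ | ⟨h1, _⟩
        · exact h1
        · exact absurd h1 hd.2
      rw [hF]
      simp only
      rw [hX _ h1, hX _ hd.1]
      ring
    rw [Finset.sum_congr rfl e1, Finset.sum_congr rfl e2, Finset.sum_const_zero, add_zero]
  have claim5 : ∑ d ∈ Y, F d = - ∑ d ∈ K2, ((t d : ℕ) : ℤ) := by
    rw [← Finset.sum_filter_add_sum_filter_not Y (fun d => γ⁻¹ d ∈ X) F, ← hK2]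
    have e1 : ∀ d ∈ K2, F d = -((t d : ℕ) : ℤ) := by
      intro d hd
      rw [hK2, Finset.mem_filter] at hd
      rw [hF]
      simp only
      rw [hX _ hd.2, hY _ hd.1]
      push_cast
      ring
    have e2 : ∀ d ∈ Y.filter (fun d => ¬ (γ⁻¹ d ∈ X)), F d = 0 := by
      intro d hd
      rw [Finset.mem_filter] at hd
      have h1 : γ⁻¹ d ∈ Y := by
        rcases hYdich d hd.1 with ⟨h1, _⟩ | ⟨h1, _⟩
        · exact absurd h1 hd.2
        · exact h1
      rw [hF]
      simp only
      rw [hY _ h1, hY _ hd.1]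
      ring
    rw [Finset.sum_congr rfl e1, Finset.sum_congr rfl e2, Finset.sum_const_zero, add_zero,
      Finset.sum_neg_distrib]
  have hlow : (K1.card : ℤ) * ((v : ℤ) + 1) ≤ ∑ d ∈ K1, ((t d : ℕ) : ℤ) := by
    have : ∀ d ∈ K1, (v : ℤ) + 1 ≤ ((t d : ℕ) : ℤ) := by
      intro d hd
      rw [hK1, Finset.mem_filter] at hd
      have := hXv d hd.1
      omega
    have h := Finset.card_nsmul_le_sum K1 _ _ this
    rwa [nsmul_eq_mul] at h
  have hhigh : ∑ d ∈ K2, ((t d : ℕ) : ℤ) ≤ (K2.card : ℤ) * (v : ℤ) := by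
    have : ∀ d ∈ K2, ((t d : ℕ) : ℤ) ≤ (v : ℤ) := by
      intro d hd
      rw [hK2, Finset.mem_filter] at hd
      have := hYv d hd.1
      omega
    have h := Finset.sum_le_card_nsmul K2 _ _ this
    rwa [nsmul_eq_mul] at h
  have hpos : 0 < (m1 (t.trans (conjP n lam t γ)) : ℤ) - (m1 t : ℤ) := by
    rw [claim1, claim2, Finset.sum_union hdisj, claim4, claim5]
    have hc1 : 0 < K1.card := Finset.card_pos.mpr hK1ne
    have : (K1.card : ℤ) = (K2.card : ℤ) := by exact_mod_cast hKcard
    nlinarith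
  have : (m1 t : ℤ) < (m1 (t.trans (conjP n lam t γ)) : ℤ) := by omega
  exact_mod_cast this

end PartB2

section PartB3
variable {n : ℕ} {lam : List ℕ}

/-- Existence of a Garnir transversal containing the identity and meeting
`Sym_X Sym_Y` only in the identity. -/
lemma exists_transversal (X Y : Finset (Cell lam)) (hd : Disjoint X Y) :
    ∃ Δ : Finset (Equiv.Perm (Cell lam)),
      (∀ γ ∈ Δ, γ ∈ SymOn lam (X ∪ Y)) ∧
      (∀ g ∈ SymOn lam (X ∪ Y), ∃! δ, δ ∈ Δ ∧ δ⁻¹ * g ∈ prodXY lam X Y) ∧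
      (1 : Equiv.Perm (Cell lam)) ∈ Δ ∧
      (∀ δ ∈ Δ, δ ∈ prodXY lam X Y → δ = 1) := by
  classical
  set P := prodXY lam X Y with hP
  have hP1 : (1 : Equiv.Perm (Cell lam)) ∈ P := prodXY_one X Y
  set st : Setoid (Equiv.Perm (Cell lam)) :=
    ⟨fun g h => g⁻¹ * h ∈ P,
      ⟨fun g => by rw [inv_mul_cancel]; exact hP1,
       fun {g h} hgh => by
        have := prodXY_inv hd hgh
        rwa [mul_inv_rev, inv_inv] at this,
       fun {g h k} h1 h2 => by
        have := prodXY_mul hd h1 h2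
        have e : g⁻¹ * h * (h⁻¹ * k) = g⁻¹ * k := by group
        rwa [e] at this⟩⟩ with hst
  set r : Equiv.Perm (Cell lam) → Equiv.Perm (Cell lam) :=
    fun g => if g ∈ P then 1 else (Quotient.mk st g).out with hr
  have hrel : ∀ g, g⁻¹ * r g ∈ P := by
    intro g
    simp only [hr]
    by_cases hg : g ∈ P
    · rw [if_pos hg, mul_one]
      exact prodXY_inv hd hg
    · rw [if_neg hg]
      have h1 : st.r (Quotient.mk st g).out g := Quotient.mk_out (s := st) g
      have h2 : (Quotient.mk st g).out⁻¹ * g ∈ P := h1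
      have := prodXY_inv hd h2
      rwa [mul_inv_rev, inv_inv] at this
  have hconst : ∀ g h, g⁻¹ * h ∈ P → r g = r h := by
    intro g h hgh
    have hq : Quotient.mk st g = Quotient.mk st h := Quotient.sound hgh
    have hiff : g ∈ P ↔ h ∈ P := by
      constructor
      · intro hg
        have := prodXY_mul hd hg hgh
        have e : g * (g⁻¹ * h) = h := by group
        rwa [e] at this
      · intro hh
        have := prodXY_mul hd hh (prodXY_inv hd hgh)
        have e : h * (g⁻¹ * h)⁻¹ = g := by group
        rwa [e] at this
    simp only [hr]
    by_cases hg : g ∈ P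
    · rw [if_pos hg, if_pos (hiff.mp hg)]
    · rw [if_neg hg, if_neg (fun hh => hg (hiff.mpr hh)), hq]
  refine ⟨(univ.filter (· ∈ SymOn lam (X ∪ Y))).image r, ?_, ?_, ?_, ?_⟩
  · -- image inside SymOn
    intro δ hδ
    obtain ⟨g, hg, rfl⟩ := Finset.mem_image.mp hδ
    rw [Finset.mem_filter] at hg
    have h1 : g⁻¹ * r g ∈ P := hrel g
    have h2 : g⁻¹ * r g ∈ SymOn lam (X ∪ Y) := prodXY_subset_symOn X Y h1
    have e : g * (g⁻¹ * r g) = r g := by group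
    rw [← e]
    exact symOn_mul hg.2 h2
  · -- transversal property
    intro g hg
    refine ⟨r g, ⟨Finset.mem_image.mpr ⟨g, Finset.mem_filter.mpr ⟨Finset.mem_univ _, hg⟩, rfl⟩, ?_⟩, ?_⟩
    · have := prodXY_inv hd (hrel g)
      rwa [mul_inv_rev, inv_inv] at this
    · rintro δ' ⟨hδ'Δ, hδ'P⟩
      obtain ⟨g', hg', rfl⟩ := Finset.mem_image.mp hδ'Δ
      have h1 : (r g')⁻¹ * g ∈ P := hδ'P
      have h2 : g'⁻¹ * r g' ∈ P := hrel g'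
      have h3 : g'⁻¹ * g ∈ P := by
        have := prodXY_mul hd h2 h1
        have e : g'⁻¹ * r g' * ((r g')⁻¹ * g) = g'⁻¹ * g := by group
        rwa [e] at this
      exact hconst g' g h3
  · -- 1 ∈ Δ
    apply Finset.mem_image.mpr
    refine ⟨1, Finset.mem_filter.mpr ⟨Finset.mem_univ _, symOn_one _⟩, ?_⟩
    simp only [hr, if_pos hP1]
  · -- nontrivial elements avoid P
    intro δ hδ hδP
    obtain ⟨g, hg, rfl⟩ := Finset.mem_image.mp hδ
    by_cases hgP : g ∈ P
    · simp only [hr, if_pos hgP]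
    · exfalso
      have h1 : g⁻¹ * r g ∈ P := hrel g
      have h2 : (r g)⁻¹ * g ∈ P := by
        have := prodXY_inv hd h1
        rwa [mul_inv_rev, inv_inv] at this
      have : g ∈ P := by
        have := prodXY_mul hd hδP h2
        have e : r g * ((r g)⁻¹ * g) = g := by group
        rwa [e] at this
      exact hgP this

end PartB3

section PartB4
variable {n : ℕ} {lam : List ℕ}

lemma exists_adjacent_violation (t : Tab n lam) (hci : ColInc t) (hns : ¬ IsStd t) :
    ∃ c₀ c₁ : Cell lam, c₀.1 = c₁.1 ∧ (c₁.2 : ℕ) = (c₀.2 : ℕ) + 1 ∧ t c₁ < t c₀ := by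
  by_contra hcon
  push_neg at hcon
  have hadj : ∀ c c' : Cell lam, c.1 = c'.1 → (c'.2 : ℕ) = (c.2 : ℕ) + 1 → t c < t c' := by
    intro c c' h1 h2
    have hle : t c' ≥ t c := hcon c c' h1 h2
    have hne : c ≠ c' := by
      intro e
      rw [e] at h2
      omega
    have : t c ≠ t c' := fun e => hne (t.injective e)
    omega
  have H : ∀ (d : ℕ) (c c' : Cell lam), c.1 = c'.1 → (c'.2 : ℕ) = (c.2 : ℕ) + d + 1 →
      t c < t c' := by
    intro d
    induction d with
    | zero => intro c c' h1 h2; exact hadj c c' h1 h2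
    | succ d IH =>
      intro c c' h1 h2
      have hbound : (c.2 : ℕ) + d + 1 < lam.get c.1 := by
        have h3 := c'.2.isLt
        have h4 : lam.get c'.1 = lam.get c.1 := by rw [h1]
        omega
      set mid : Cell lam := ⟨c.1, ⟨(c.2 : ℕ) + d + 1, hbound⟩⟩ with hmid
      have e1 : t c < t mid := IH c mid rfl rfl
      have e2 : t mid < t c' := hadj mid c' h1 (by rw [hmid]; simp; omega)
      omega
  apply hns
  constructor
  · intro c c' h1 h2
    exact H ((c'.2 : ℕ) - (c.2 : ℕ) - 1) c c' h1 (by omega)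
  · exact hci

lemma sorted_get_le (hsort : lam.Pairwise (· ≥ ·)) {a b : Fin lam.length} (hab : a ≤ b) :
    lam.get b ≤ lam.get a := by
  rcases eq_or_lt_of_le hab with rfl | h
  · exact le_refl _
  · exact List.Pairwise.rel_get_of_lt hsort h

lemma garnir_cards (hsort : lam.Pairwise (· ≥ ·)) (c₀ c₁ : Cell lam) (h1 : c₀.1 = c₁.1)
    (h2 : (c₁.2 : ℕ) = (c₀.2 : ℕ) + 1) :
    colLen lam (c₀.2 : ℕ) <
      (univ.filter (fun c : Cell lam => (c.2 : ℕ) = (c₀.2 : ℕ) ∧ (c₀.1 : ℕ) ≤ (c.1 : ℕ))).card +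
      (univ.filter (fun c : Cell lam => (c.2 : ℕ) = (c₀.2 : ℕ) + 1 ∧ (c.1 : ℕ) ≤ (c₀.1 : ℕ))).card := by
  classical
  set j : ℕ := (c₀.2 : ℕ) with hj
  set i : ℕ := (c₀.1 : ℕ) with hi
  set X := univ.filter (fun c : Cell lam => (c.2 : ℕ) = j ∧ i ≤ (c.1 : ℕ)) with hX
  set Y := univ.filter (fun c : Cell lam => (c.2 : ℕ) = j + 1 ∧ (c.1 : ℕ) ≤ i) with hY
  have hcol0 : j + 1 < lam.get c₀.1 := by
    have h3 := c₁.2.isLt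
    have h4 : lam.get c₁.1 = lam.get c₀.1 := by rw [h1]
    omega
  -- |Y| ≥ i + 1
  have hYcard : i + 1 ≤ Y.card := by
    have hmaps : ∀ k ∈ Finset.range (i + 1), ∀ (hk : k < lam.length)
        (hjk : j + 1 < lam.get ⟨k, hk⟩), (⟨⟨k, hk⟩, ⟨j + 1, hjk⟩⟩ : Cell lam) ∈ Y := by
      intro k hk _ _
      rw [hY, Finset.mem_filter]
      refine ⟨Finset.mem_univ _, rfl, ?_⟩
      show k ≤ i
      exact Nat.lt_succ_iff.mp (Finset.mem_range.mp hk)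
    have hklen : ∀ k ∈ Finset.range (i + 1), k < lam.length := by
      intro k hk
      rw [Finset.mem_range] at hk
      have : i < lam.length := c₀.1.isLt
      omega
    have hkget : ∀ k (hk : k < lam.length), k ≤ i → j + 1 < lam.get ⟨k, hk⟩ := by
      intro k hk hki
      have : lam.get c₀.1 ≤ lam.get ⟨k, hk⟩ := sorted_get_le hsort (by
        rw [Fin.le_def]
        exact hki)
      omega
    calc i + 1 = (Finset.range (i + 1)).card := by rw [Finset.card_range]
    _ ≤ Y.card := by
        apply Finset.card_le_card_of_injOn
          (fun k => if hk : k < lam.length ∧ k ≤ i then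
            (⟨⟨k, hk.1⟩, ⟨j + 1, hkget k hk.1 hk.2⟩⟩ : Cell lam) else c₁)
        · intro k hk
          have hk' : k < lam.length ∧ k ≤ i :=
            ⟨hklen k hk, by rw [Finset.mem_coe, Finset.mem_range] at hk; omega⟩
          simp only [Finset.mem_coe, dif_pos hk']
          exact hmaps k hk hk'.1 (hkget k hk'.1 hk'.2)
        · intro a ha b hb hab
          rw [Finset.mem_coe] at ha hb
          have ha' : a < lam.length ∧ a ≤ i :=
            ⟨hklen a ha, by rw [Finset.mem_range] at ha; omega⟩
          have hb' : b < lam.length ∧ b ≤ i :=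
            ⟨hklen b hb, by rw [Finset.mem_range] at hb; omega⟩
          simp only [dif_pos ha', dif_pos hb'] at hab
          have := congrArg (fun c : Cell lam => (c.1 : ℕ)) hab
          simpa using this
  -- colLen ≤ |X| + i
  have hsplit : colLen lam j =
      ((univ.filter (fun i' : Fin lam.length => j < lam.get i')).filter
        (fun i' : Fin lam.length => i ≤ (i' : ℕ))).card +
      ((univ.filter (fun i' : Fin lam.length => j < lam.get i')).filter
        (fun i' : Fin lam.length => ¬ i ≤ (i' : ℕ))).card := by
    rw [colLen_eq_card]
    exact (Finset.card_filter_add_card_filter_not (p := fun i' => i ≤ ((i' : Fin lam.length) : ℕ))).symm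
  have hup : ((univ.filter (fun i' : Fin lam.length => j < lam.get i')).filter
      (fun i' : Fin lam.length => i ≤ (i' : ℕ))).card ≤ X.card := by
    apply Finset.card_le_card_of_injOn
      (fun i' => if hi' : j < lam.get i' then (⟨i', ⟨j, hi'⟩⟩ : Cell lam) else c₀)
    · intro i' hi'
      rw [Finset.mem_coe, Finset.mem_filter, Finset.mem_filter] at hi'
      simp only [Finset.mem_coe, dif_pos hi'.1.2]
      rw [hX, Finset.mem_filter]
      exact ⟨Finset.mem_univ _, rfl, hi'.2⟩
    · intro a ha b hb hab
      rw [Finset.mem_coe, Finset.mem_filter, Finset.mem_filter] at ha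
      rw [Finset.mem_coe, Finset.mem_filter, Finset.mem_filter] at hb
      simp only [dif_pos ha.1.2, dif_pos hb.1.2] at hab
      exact congrArg Sigma.fst hab
  have hlow : ((univ.filter (fun i' : Fin lam.length => j < lam.get i')).filter
      (fun i' : Fin lam.length => ¬ i ≤ (i' : ℕ))).card ≤ i := by
    calc _ ≤ (Finset.range i).card := by
          apply Finset.card_le_card_of_injOn (fun i' : Fin lam.length => (i' : ℕ))
          · intro i' hi'
            rw [Finset.mem_coe, Finset.mem_filter] at hi'
            simp only [Finset.mem_coe, Finset.mem_range]
            omega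
          · intro a _ b _ hab
            exact Fin.ext hab

    _ = i := Finset.card_range i
  omega

end PartB4

section PartB5
variable {n : ℕ} {lam : List ℕ}

/-- The span of the relations together with the standard basis elements. -/
noncomputable def USub (n : ℕ) (lam : List ℕ) : Submodule ℤ (Tab n lam →₀ ℤ) :=
  Submodule.span ℤ (GSet n lam ∪ HSet n lam ∪
    ((fun s : Tab n lam => Finsupp.single s (1:ℤ)) '' {s | IsStd s}))

lemma trans_one (u : Tab n lam) : u.trans (1 : Sym n) = u := Equiv.ext (fun _ => rfl)

theorem straighten (hsort : lam.Pairwise (· ≥ ·)) (u : Tab n lam) :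
    Finsupp.single u (1:ℤ) ∈ USub n lam := by
  classical
  suffices H : ∀ N (u : Tab n lam), MM u = N → Finsupp.single u (1:ℤ) ∈ USub n lam from
    H _ u rfl
  intro N
  induction N using Nat.strong_induction_on with
  | _ N IH =>
  intro u hMM
  by_cases hci : ColInc u
  · by_cases hstd : IsStd u
    · exact Submodule.subset_span (Or.inr ⟨u, hstd, rfl⟩)
    · obtain ⟨c₀, c₁, h1, h2, hviol⟩ := exists_adjacent_violation u hci hstd
      set j : ℕ := (c₀.2 : ℕ) with hj
      set i : ℕ := (c₀.1 : ℕ) with hi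
      set X := univ.filter (fun c : Cell lam => (c.2 : ℕ) = j ∧ i ≤ (c.1 : ℕ)) with hX
      set Y := univ.filter (fun c : Cell lam => (c.2 : ℕ) = j + 1 ∧ (c.1 : ℕ) ≤ i) with hYd
      have hXcol : ∀ c ∈ X, (c.2 : ℕ) = j := fun c hc => (Finset.mem_filter.mp hc).2.1
      have hYcol : ∀ c ∈ Y, (c.2 : ℕ) = j + 1 := fun c hc => (Finset.mem_filter.mp hc).2.1
      have hdisj := garnir_disjoint (Nat.lt_succ_self j) hXcol hYcol
      obtain ⟨Δ, hΔS, hΔtrans, hΔ1, hΔP⟩ := exists_transversal X Y hdisj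
      have hXne : X.Nonempty :=
        ⟨c₀, Finset.mem_filter.mpr ⟨Finset.mem_univ _, rfl, le_refl _⟩⟩
      have hYne : Y.Nonempty := by
        refine ⟨c₁, Finset.mem_filter.mpr ⟨Finset.mem_univ _, h2, ?_⟩⟩
        rw [hi, h1]
      have hG : IsGarnir lam X Y Δ :=
        ⟨j, j + 1, Nat.lt_succ_self j, hXne, hYne, hXcol, hYcol,
          garnir_cards hsort c₀ c₁ h1 h2, hΔS, hΔtrans⟩
      have hgar : garnirElt n lam u Δ ∈ USub n lam :=
        Submodule.subset_span (Or.inl (Or.inl ⟨u, X, Y, Δ, hG, rfl⟩))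
      have hXv : ∀ c ∈ X, (u c₁ : ℕ) < (u c : ℕ) := by
        intro c hc
        obtain ⟨-, hcc, hcr⟩ := Finset.mem_filter.mp hc
        rcases eq_or_lt_of_le hcr with he | hlt
        · have : c = c₀ := cellEq (Fin.ext he.symm) (by rw [hcc, hj])
          rw [this]
          exact hviol
        · have hr : c₀.1 < c.1 := by rw [Fin.lt_def]; exact hlt
          have := hci c₀ c (by rw [hcc, hj]) hr
          have h3 : (u c₀ : ℕ) < (u c : ℕ) := this
          have h4 : (u c₁ : ℕ) < (u c₀ : ℕ) := hviol
          omega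
      have hYv : ∀ c ∈ Y, (u c : ℕ) ≤ (u c₁ : ℕ) := by
        intro c hc
        obtain ⟨-, hcc, hcr⟩ := Finset.mem_filter.mp hc
        rcases eq_or_lt_of_le hcr with he | hlt
        · have : c = c₁ := cellEq (Fin.ext (by rw [he, hi, h1])) (by rw [hcc, h2])
          rw [this]
        · have hr : c.1 < c₁.1 := by
            rw [Fin.lt_def]
            have : (c₁.1 : ℕ) = i := by rw [hi, h1]
            omega
          have := hci c c₁ (by rw [hcc, h2]) hr
          exact le_of_lt this
      have hterm : ∀ γ ∈ Δ.erase 1,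
          Finsupp.single (u.trans (conjP n lam u γ)) (1:ℤ) ∈ USub n lam := by
        intro γ hγ
        rw [Finset.mem_erase] at hγ
        have hγS := hΔS γ hγ.2
        have hγP : γ ∉ prodXY lam X Y := fun hp => hγ.1 (hΔP γ hγ.2 hp)
        have hm1 : m1 u < m1 (u.trans (conjP n lam u γ)) :=
          m1_garnir_lt u hXcol hYcol hXv hYv hγS hγP
        exact IH (MM (u.trans (conjP n lam u γ))) (by rw [← hMM]; exact MM_lt_of_m1 hm1) _ rfl
      have hone : ((Equiv.Perm.sign (conjP n lam u 1) : ℤ)) •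
          Finsupp.single (u.trans (conjP n lam u 1)) (1:ℤ) = Finsupp.single u (1:ℤ) := by
        rw [conjP_one, trans_one, map_one]
        simp
      have hsum : garnirElt n lam u Δ = Finsupp.single u (1:ℤ) +
          ∑ γ ∈ Δ.erase 1, ((Equiv.Perm.sign (conjP n lam u γ) : ℤ)) •
            Finsupp.single (u.trans (conjP n lam u γ)) (1:ℤ) := by
        rw [garnirElt, ← Finset.add_sum_erase _ _ hΔ1, hone]
      have key : Finsupp.single u (1:ℤ) = garnirElt n lam u Δ -
          ∑ γ ∈ Δ.erase 1, ((Equiv.Perm.sign (conjP n lam u γ) : ℤ)) •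
            Finsupp.single (u.trans (conjP n lam u γ)) (1:ℤ) := by
        rw [hsum]; abel
      rw [key]
      apply Submodule.sub_mem _ hgar
      apply Submodule.sum_mem
      intro γ hγ
      exact Submodule.smul_mem _ _ (hterm γ hγ)
  · obtain ⟨c, c', hcol, hrow, hnlt⟩ :
        ∃ c c' : Cell lam, (c.2 : ℕ) = (c'.2 : ℕ) ∧ c.1 < c'.1 ∧ ¬ u c < u c' := by
      by_contra hfail
      push_neg at hfail
      exact hci (fun c c' hh1 hh2 => hfail c c' hh1 hh2)
    have hne : c ≠ c' := fun e => by rw [e] at hrow; exact lt_irrefl _ hrow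
    have huv : u c' < u c :=
      lt_of_le_of_ne (not_lt.mp hnlt) (fun e => hne (u.injective e.symm))
    have hτcol : ∀ d, (((Equiv.swap c c') d).2 : ℕ) = (d.2 : ℕ) := swap_colPres hcol
    set π := conjP n lam u (Equiv.swap c c') with hπ
    have hπC : π ∈ colStab u := conjP_mem_colStab u hτcol
    set u' := u.trans π with hu'
    have hm1 : m1 u' = m1 u := m1_trans_colPres u hτcol
    have hm2 : m2 u < m2 u' := m2_swap_lt u hrow huv
    have hu'U : Finsupp.single u' (1:ℤ) ∈ USub n lam :=
      IH (MM u') (by rw [← hMM]; exact MM_lt_of_m2 hm1 hm2) u' rfl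
    have hH : (Finsupp.single u' 1 - (Equiv.Perm.sign π : ℤ) • Finsupp.single u 1 :
        Tab n lam →₀ ℤ) ∈ USub n lam :=
      Submodule.subset_span (Or.inl (Or.inr ⟨u, π, hπC, rfl⟩))
    have key : Finsupp.single u (1:ℤ) =
        (Equiv.Perm.sign π : ℤ) • Finsupp.single u' (1:ℤ) -
        (Equiv.Perm.sign π : ℤ) •
          (Finsupp.single u' 1 - (Equiv.Perm.sign π : ℤ) • Finsupp.single u 1) := by
      rw [smul_sub, smul_smul, sign_mul_self, one_smul]
      abel
    rw [key]
    exact Submodule.sub_mem _ (Submodule.smul_mem _ _ hu'U) (Submodule.smul_mem _ _ hH)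

end PartB5

section PartB6
variable {n : ℕ} {lam : List ℕ}

lemma geo (B : ℕ) (hB : 1 ≤ B) : ∀ m : ℕ, (∑ k ∈ Finset.range m, (B - 1) * B ^ k) + 1 = B ^ m := by
  intro m
  induction m with
  | zero => simp
  | succ m IH =>
    rw [Finset.sum_range_succ]
    have e1 : (∑ k ∈ Finset.range m, (B - 1) * B ^ k) + (B - 1) * B ^ m + 1
        = ((∑ k ∈ Finset.range m, (B - 1) * B ^ k) + 1) + (B - 1) * B ^ m := by ring
    rw [e1, IH]
    have e2 : B ^ m + (B - 1) * B ^ m = (1 + (B - 1)) * B ^ m := by ring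
    rw [e2, (by omega : 1 + (B - 1) = B), pow_succ, mul_comm]

lemma enc_lt {B : ℕ} (f g : Fin n → ℕ) (hf : ∀ x, f x < B) (hg : ∀ x, g x < B)
    (a : Fin n) (htop : ∀ b, a < b → f b = g b) (hlt : f a < g a) :
    ∑ x : Fin n, f x * B ^ (x : ℕ) < ∑ x : Fin n, g x * B ^ (x : ℕ) := by
  classical
  have hB : 1 ≤ B := by have := hg a; omega
  have hsplit : ∀ h : Fin n → ℕ, ∑ x : Fin n, h x * B ^ (x : ℕ)
      = (∑ x ∈ univ.filter (fun x : Fin n => a < x), h x * B ^ (x : ℕ))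
        + (∑ x ∈ univ.filter (fun x : Fin n => ¬ a < x), h x * B ^ (x : ℕ)) :=
    fun h => (Finset.sum_filter_add_sum_filter_not univ _ _).symm
  rw [hsplit f, hsplit g]
  have heq : ∑ x ∈ univ.filter (fun x : Fin n => a < x), f x * B ^ (x : ℕ)
      = ∑ x ∈ univ.filter (fun x : Fin n => a < x), g x * B ^ (x : ℕ) := by
    apply Finset.sum_congr rfl
    intro x hx
    rw [htop x (Finset.mem_filter.mp hx).2]
  rw [heq]
  apply Nat.add_lt_add_left
  have hsub : univ.filter (fun x : Fin n => ¬ a < x)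
      = insert a (univ.filter (fun x : Fin n => x < a)) := by
    ext x
    simp only [Finset.mem_filter, Finset.mem_insert, Finset.mem_univ, true_and, not_lt]
    rw [le_iff_lt_or_eq]
    constructor
    · rintro (h | h)
      · exact Or.inr h
      · exact Or.inl h
    · rintro (h | h)
      · exact Or.inr h
      · exact Or.inl h
  have hanot : a ∉ univ.filter (fun x : Fin n => x < a) := by
    simp [Finset.mem_filter]
  rw [hsub, Finset.sum_insert hanot, Finset.sum_insert hanot]
  have hbound : ∑ x ∈ univ.filter (fun x : Fin n => x < a), f x * B ^ (x : ℕ) < B ^ (a : ℕ) := by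
    have h1 : ∑ x ∈ univ.filter (fun x : Fin n => x < a), f x * B ^ (x : ℕ)
        ≤ ∑ x ∈ univ.filter (fun x : Fin n => x < a), (B - 1) * B ^ (x : ℕ) := by
      apply Finset.sum_le_sum
      intro x _
      exact Nat.mul_le_mul_right _ (by have := hf x; omega)
    have h2 : ∑ x ∈ univ.filter (fun x : Fin n => x < a), (B - 1) * B ^ (x : ℕ)
        = ∑ k ∈ Finset.range (a : ℕ), (B - 1) * B ^ k := by
      apply Finset.sum_nbij' (fun x : Fin n => (x : ℕ))
        (fun k => if hk : k < n then (⟨k, hk⟩ : Fin n) else a)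
      · intro x hx
        rw [Finset.mem_range]
        exact (Finset.mem_filter.mp hx).2
      · intro k hk
        rw [Finset.mem_range] at hk
        have hkn : k < n := lt_trans hk a.isLt
        rw [dif_pos hkn, Finset.mem_filter]
        exact ⟨Finset.mem_univ _, by rw [Fin.lt_def]; exact hk⟩
      · intro x hx
        have hxn : (x : ℕ) < n := x.isLt
        rw [dif_pos hxn]
      · intro k hk
        rw [Finset.mem_range] at hk
        have hkn : k < n := lt_trans hk a.isLt
        rw [dif_pos hkn]
      · intro x _
        rfl
    have h3 := geo B hB (a : ℕ)
    omega
  have hga : f a * B ^ (a : ℕ) + B ^ (a : ℕ) ≤ g a * B ^ (a : ℕ) := by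
    have h4 : (f a + 1) * B ^ (a : ℕ) ≤ g a * B ^ (a : ℕ) :=
      Nat.mul_le_mul_right _ (by omega)
    rw [add_mul, one_mul] at h4
    exact h4
  omega

noncomputable def encKey (t : Tab n lam) : ℕ :=
  ∑ a : Fin n, ((t.symm a).1 : ℕ) * (lam.length + 1) ^ (a : ℕ)

lemma trans_symm (t : Tab n lam) (σ : Sym n) (b : Fin n) :
    (t.trans σ).symm b = t.symm (σ⁻¹ b) := by
  rw [Equiv.symm_trans_apply, Equiv.Perm.inv_def]

lemma encKey_lt (t : Tab n lam) (hci : ColInc t) (σ : Sym n) (hσ : σ ∈ colStab t)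
    (hne : σ ≠ 1) : encKey (t.trans σ) < encKey t := by
  classical
  have hex : ∃ a, σ⁻¹ a ≠ a := by
    by_contra h
    push_neg at h
    exact hne (inv_eq_one.mp (Equiv.ext h))
  set Fset := univ.filter (fun a : Fin n => σ⁻¹ a ≠ a) with hFs
  have hFne : Fset.Nonempty :=
    ⟨hex.choose, Finset.mem_filter.mpr ⟨Finset.mem_univ _, hex.choose_spec⟩⟩
  set a0 := Fset.max' hFne with ha0
  have ha0F : σ⁻¹ a0 ≠ a0 := (Finset.mem_filter.mp (Fset.max'_mem hFne)).2
  have htop : ∀ b, a0 < b → σ⁻¹ b = b := by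
    intro b hb
    by_contra hbb
    exact absurd (Fset.le_max' b (Finset.mem_filter.mpr ⟨Finset.mem_univ _, hbb⟩))
      (not_le.mpr hb)
  have hd : σ⁻¹ a0 < a0 := by
    have hdF : σ⁻¹ (σ⁻¹ a0) ≠ σ⁻¹ a0 := by
      intro e
      exact ha0F ((σ⁻¹ : Sym n).injective e)
    have hmem : σ⁻¹ a0 ∈ Fset := Finset.mem_filter.mpr ⟨Finset.mem_univ _, hdF⟩
    exact lt_of_le_of_ne (Fset.le_max' _ hmem) ha0F
  have hcd : ((t.symm (σ⁻¹ a0)).2 : ℕ) = ((t.symm a0).2 : ℕ) := by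
    have h5 := hσ (σ⁻¹ a0)
    rw [perm_apply_inv_self] at h5
    exact h5.symm
  have hrowlt : ((t.symm (σ⁻¹ a0)).1 : ℕ) < ((t.symm a0).1 : ℕ) := by
    have hne2 : (t.symm (σ⁻¹ a0)).1 ≠ (t.symm a0).1 := by
      intro e
      have : t.symm (σ⁻¹ a0) = t.symm a0 := cellEq e hcd
      exact ha0F (t.symm.injective this)
    rcases lt_trichotomy ((t.symm (σ⁻¹ a0)).1 : ℕ) ((t.symm a0).1 : ℕ) with h | h | h
    · exact h
    · exact absurd (Fin.ext h) hne2
    · exfalso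
      have := hci (t.symm a0) (t.symm (σ⁻¹ a0)) hcd.symm (by rw [Fin.lt_def]; exact h)
      rw [Equiv.apply_symm_apply, Equiv.apply_symm_apply] at this
      exact absurd this (not_lt.mpr hd.le)
  rw [encKey, encKey]
  refine enc_lt _ _ ?_ ?_ a0 ?_ ?_
  · intro x
    have := ((t.trans σ).symm x).1.isLt
    omega
  · intro x
    have := (t.symm x).1.isLt
    omega
  · intro b hb
    rw [trans_symm, htop b hb]
  · rw [trans_symm]
    exact hrowlt

lemma std_pos (t : Tab n lam) (hstd : IsStd t) (a : Fin n) :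
    ((t.symm a).2 : ℕ)
      = (univ.filter fun b => b < a ∧ (t.symm b).1 = (t.symm a).1).card := by
  classical
  have hp : ((t.symm a).2 : ℕ) < lam.get (t.symm a).1 := (t.symm a).2.isLt
  have hcard : (univ.filter fun b => b < a ∧ (t.symm b).1 = (t.symm a).1).card
      = (Finset.range ((t.symm a).2 : ℕ)).card := by
    refine Finset.card_bij' (fun b _ => ((t.symm b).2 : ℕ))
      (fun k hk => t ⟨(t.symm a).1, ⟨k, lt_trans (Finset.mem_range.mp hk) hp⟩⟩)
      ?hi ?hj ?lef ?rig
    case hi =>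
      intro b hb
      obtain ⟨-, hba, hbr⟩ := Finset.mem_filter.mp hb
      rw [Finset.mem_range]
      rcases lt_trichotomy ((t.symm b).2 : ℕ) ((t.symm a).2 : ℕ) with h | h | h
      · exact h
      · exfalso
        have h5 : t.symm b = t.symm a := cellEq hbr h
        have h6 : b = a := t.symm.injective h5
        exact absurd h6 (ne_of_lt hba)
      · exfalso
        have h6 := hstd.1 (t.symm a) (t.symm b) hbr.symm h
        rw [Equiv.apply_symm_apply, Equiv.apply_symm_apply] at h6
        exact absurd h6 (not_lt.mpr hba.le)
    case hj =>
      intro k hk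
      rw [Finset.mem_filter]
      refine ⟨Finset.mem_univ _, ?_, ?_⟩
      · have h7 := hstd.1 (⟨(t.symm a).1, ⟨k, lt_trans (Finset.mem_range.mp hk) hp⟩⟩ : Cell lam)
          (t.symm a) rfl (by simpa using Finset.mem_range.mp hk)
        rw [Equiv.apply_symm_apply] at h7
        exact h7
      · simp only [Equiv.symm_apply_apply]
    case lef =>
      intro b hb
      obtain ⟨-, hba, hbr⟩ := Finset.mem_filter.mp hb
      have h5 : (⟨(t.symm a).1, ⟨((t.symm b).2 : ℕ),
          (by rw [← hbr]; exact (t.symm b).2.isLt)⟩⟩ : Cell lam) = t.symm b :=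
        cellEq hbr.symm rfl
      exact (congrArg t h5).trans (Equiv.apply_symm_apply t b)
    case rig =>
      intro k hk
      exact congrArg (fun c : Cell lam => (c.2 : ℕ)) (t.symm_apply_apply _)
  rw [hcard, Finset.card_range]

lemma std_eq_of_key {t t' : Tab n lam} (hstd : IsStd t) (hstd' : IsStd t')
    (h : ∀ a, (t.symm a).1 = (t'.symm a).1) : t = t' := by
  have hsymm : ∀ a, t.symm a = t'.symm a := by
    intro a
    apply cellEq (h a)
    rw [std_pos t hstd a, std_pos t' hstd' a]
    congr 1
    apply Finset.filter_congr
    intro b _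
    rw [h b, h a]
  apply Equiv.ext
  intro c
  have h8 := hsymm (t c)
  rw [Equiv.symm_apply_apply] at h8
  have h9 := congrArg t' h8.symm
  rwa [Equiv.apply_symm_apply] at h9

lemma indep (y : Tab n lam →₀ ℤ) (hsupp : ∀ t ∈ y.support, IsStd t)
    (hy : psi n lam y = 0) : y = 0 := by
  classical
  by_contra hne
  have hsne : y.support.Nonempty := Finsupp.support_nonempty_iff.mpr hne
  obtain ⟨t0, ht0, hmax⟩ := Finset.exists_max_image y.support (fun t => encKey t) hsne
  set Q0 := Quotient.mk (tabSetoid n lam) t0 with hQ0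
  have hcoeff : ∀ t ∈ y.support, eTab n lam t Q0 = if t = t0 then 1 else 0 := by
    intro t ht
    have hstd := hsupp t ht
    rw [eTab_eq_sum, Finsupp.finset_sum_apply]
    have hterm : ∀ σ ∈ Cfin t,
        (((Equiv.Perm.sign σ : ℤ) •
          Finsupp.single (Quotient.mk (tabSetoid n lam) (t.trans σ)) (1:ℤ)) : Mlam n lam) Q0
        = if σ = 1 ∧ t = t0 then 1 else 0 := by
      intro σ hσm
      have hσ := mem_Cfin.mp hσm
      rw [Finsupp.smul_apply, Finsupp.single_apply]
      by_cases heq : Quotient.mk (tabSetoid n lam) (t.trans σ) = Q0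
      · have hkeys : ∀ a : Fin n, ((t.trans σ).symm a).1 = (t0.symm a).1 :=
          Quotient.exact heq
        by_cases hσ1 : σ = 1
        · subst hσ1
          have hkeys' : ∀ a : Fin n, (t.symm a).1 = (t0.symm a).1 := by
            intro a
            have := hkeys a
            rwa [trans_one] at this
          have htt0 : t = t0 := std_eq_of_key hstd (hsupp t0 ht0) hkeys'
          rw [if_pos heq, if_pos ⟨rfl, htt0⟩, map_one]
          simp
        · exfalso
          have hlt := encKey_lt t hstd.2 σ hσ hσ1
          have he : encKey (t.trans σ) = encKey t0 := by
            rw [encKey, encKey]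
            apply Finset.sum_congr rfl
            intro a _
            rw [hkeys a]
          have hle := hmax t ht
          omega
      · rw [if_neg heq, if_neg ?_]
        · simp
        · rintro ⟨rfl, rfl⟩
          rw [trans_one] at heq
          exact heq rfl
    rw [Finset.sum_congr rfl hterm]
    by_cases ht0eq : t = t0
    · subst ht0eq
      have e : ∀ σ ∈ Cfin t, (if σ = 1 ∧ t = t then (1:ℤ) else 0) = if σ = 1 then 1 else 0 := by
        intro σ _
        simp
      rw [Finset.sum_congr rfl e, Finset.sum_ite_eq' (Cfin t) 1 (fun _ => (1:ℤ))]
      rw [if_pos (mem_Cfin.mpr (colStab_one t)), if_pos rfl]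
    · have e : ∀ σ ∈ Cfin t, (if σ = 1 ∧ t = t0 then (1:ℤ) else 0) = 0 := by
        intro σ _
        simp [ht0eq]
      rw [Finset.sum_congr rfl e, Finset.sum_const_zero, if_neg ht0eq]
  have happ : (psi n lam y) Q0 = y t0 := by
    rw [psi, Finsupp.linearCombination_apply, Finsupp.sum, Finsupp.finset_sum_apply]
    have e : ∀ t ∈ y.support, ((y t • eTab n lam t) : Mlam n lam) Q0
        = if t = t0 then y t else 0 := by
      intro t ht
      rw [Finsupp.smul_apply, hcoeff t ht]
      by_cases h : t = t0
      · rw [if_pos h, if_pos h]; simp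
      · rw [if_neg h, if_neg h]; simp
    rw [Finset.sum_congr rfl e, Finset.sum_ite_eq' y.support t0 (fun t => y t), if_pos ht0]
  rw [hy] at happ
  exact absurd happ.symm (Finsupp.mem_support_iff.mp ht0)

end PartB6

/-- **Presentation of the integral Specht module.** The map `ψ : ℤ𝒯(λ) → M^λ_ℤ`,
`t ↦ e_t`, has image the Specht module `S^λ_ℤ` (the span of the polytabloids), and its
kernel is generated as a `ℤ`-module by the Garnir elements `G^t_Δ · t` together with the
elements `π · t - sgn(π) t` for `π ∈ C_t`. -/
theorem specht_presentation (n : ℕ) (lam : List ℕ) (hl : IsPartition n lam) :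
    LinearMap.range (psi n lam) = Submodule.span ℤ (Set.range (eTab n lam)) ∧
    LinearMap.ker (psi n lam) = Submodule.span ℤ (GSet n lam ∪ HSet n lam) := by
  have hspanker : Submodule.span ℤ (GSet n lam ∪ HSet n lam) ≤ LinearMap.ker (psi n lam) := by
    rw [Submodule.span_le]
    rintro z (hz | hz)
    · exact LinearMap.mem_ker.mpr (psi_GSet z hz)
    · exact LinearMap.mem_ker.mpr (psi_HSet z hz)
  constructor
  · rw [psi]
    exact Finsupp.range_linearCombination ℤ
  · apply le_antisymm
    · intro x hx
      rw [LinearMap.mem_ker] at hx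
      have hxU : x ∈ USub n lam := by
        have hrepr : x = ∑ t ∈ x.support, (x t) • Finsupp.single t (1:ℤ) := by
          conv_lhs => rw [← Finsupp.sum_single x]
          rw [Finsupp.sum]
          apply Finset.sum_congr rfl
          intro t _
          rw [Finsupp.smul_single, smul_eq_mul, mul_one]
        rw [hrepr]
        exact Submodule.sum_mem _ (fun t _ => Submodule.smul_mem _ _ (straighten hl.1 t))
      rw [USub, Submodule.span_union] at hxU
      obtain ⟨g, hg, y, hy, hgy⟩ := Submodule.mem_sup.mp hxU
      have hpsig : psi n lam g = 0 := LinearMap.mem_ker.mp (hspanker hg)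
      have hpsiy : psi n lam y = 0 := by
        have h1 : psi n lam (g + y) = 0 := by rw [hgy]; exact hx
        rw [map_add, hpsig, zero_add] at h1
        exact h1
      have hysupp : ∀ t ∈ y.support, IsStd t := by
        have h2 : y ∈ Finsupp.supported ℤ ℤ {s : Tab n lam | IsStd s} := by
          rw [Finsupp.supported_eq_span_single]
          exact hy
        intro t ht
        exact (Finsupp.mem_supported ℤ y).mp h2 ht
      have hy0 : y = 0 := indep y hysupp hpsiy
      rw [← hgy, hy0, add_zero]
      exact hg
    · exact hspanker

end SignedYoung
end

section
/- Let $\mathfrak{d} \in \mathscr{R}$ be such that $\mathrm{T}_{\mathfrak{d}}$ is a semistandard $\lambda$-tableau of type $(\alpha|\beta)$. Then the diagonal coefficient satisfies $\mathfrak{a}_{\mathfrak{d},\mathfrak{d}} = |\mathrm{stab}_{C_{\t_0}}(\mathrm{T}_{\mathfrak{d}})| = |C_{\t_0} \cap \mathfrak{d}\,\mathrm{Sym}_{\alpha|\beta}\,\mathfrak{d}^{-1}|$. In particular, $\mathfrak{a}_{\mathfrak{d},\mathfrak{d}}$ is a positive integer. -/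
namespace SignedYoung
open Equiv Finset
open scoped Classical

section Aux

variable {n : ℕ} {lam : List ℕ}

private lemma take_sum_le (α β : List ℕ) (k : ℕ) (hk : k ≤ α.length) :
    ((α ++ β).take k).sum ≤ α.sum := by
  rw [List.take_append_of_le_length hk]
  calc (α.take k).sum ≤ (α.take k).sum + (α.drop k).sum := Nat.le_add_right _ _
    _ = α.sum := by rw [← List.sum_append, List.take_append_drop]

private lemma blockOf_lt_length_iff (α β : List ℕ) (i : ℕ) :
    blockOf (α ++ β) i < α.length ↔ i < α.sum := by
  constructor
  · intro h
    by_contra hge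
    push_neg at hge
    have hle : α.length ≤ blockOf (α ++ β) i := by
      unfold blockOf
      rw [List.length_append, List.range_add, List.countP_append]
      have h1 : (List.range α.length).countP
          (fun j => decide ((List.take (j + 1) (α ++ β)).sum ≤ i))
          = (List.range α.length).length := by
        rw [List.countP_eq_length]
        intro j hj
        simp only [List.mem_range] at hj
        simp only [decide_eq_true_eq]
        exact le_trans (take_sum_le α β (j + 1) hj) hge
      simp only [List.length_range] at h1
      omega
    omega
  · intro h
    have hαne : 0 < α.length := by
      rcases α with _ | ⟨a, α'⟩
      · simp at h
      · simp
    unfold blockOf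
    rw [List.length_append, List.range_add, List.countP_append]
    have h2 : (List.countP (fun j => decide ((List.take (j + 1) (α ++ β)).sum ≤ i))
        ((List.range β.length).map (fun x => α.length + x))) = 0 := by
      rw [List.countP_eq_zero]
      intro a ha
      simp only [List.mem_map, List.mem_range] at ha
      obtain ⟨x, _, rfl⟩ := ha
      simp only [decide_eq_true_eq]
      intro hcon
      have : List.take (α.length + x + 1) (α ++ β) = α ++ List.take (x + 1) β := by
        rw [show α.length + x + 1 = α.length + (x + 1) by omega, List.take_append, List.take_of_length_le (by omega), Nat.add_sub_cancel_left]
      rw [this, List.sum_append] at hcon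
      omega
    have h3 : (List.range α.length).countP
        (fun j => decide ((List.take (j + 1) (α ++ β)).sum ≤ i)) < α.length := by
      rcases Nat.lt_or_ge ((List.range α.length).countP
          (fun j => decide ((List.take (j + 1) (α ++ β)).sum ≤ i))) α.length with hlt | hge2
      · exact hlt
      · exfalso
        have hlen : (List.range α.length).countP
            (fun j => decide ((List.take (j + 1) (α ++ β)).sum ≤ i)) =
            (List.range α.length).length := by
          have := List.countP_le_length
            (p := fun j => decide ((List.take (j + 1) (α ++ β)).sum ≤ i))
            (l := List.range α.length)
          simp only [List.length_range] at this ⊢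
          omega
        rw [List.countP_eq_length] at hlen
        have := hlen (α.length - 1) (by simp [List.mem_range]; omega)
        simp only [decide_eq_true_eq] at this
        rw [show α.length - 1 + 1 = α.length by omega, List.take_left] at this
        omega
    omega

private lemma mem_young_iff {γ : List ℕ} {σ : Sym n} :
    σ ∈ youngSubgroup n γ ↔ ∀ i : Fin n, blockOf γ (σ i) = blockOf γ i :=
  Iff.rfl

private lemma colourOfIdx_eq_iff (α β : List ℕ) (i i' : ℕ) :
    colourOfIdx α β i = colourOfIdx α β i' ↔ blockOf (α ++ β) i = blockOf (α ++ β) i' := by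
  constructor
  · intro h
    unfold colourOfIdx at h
    split_ifs at h with h1 h2 h2
    · have := toLex.injective h
      simpa [cCol] using this
    · exact absurd (toLex.injective h) (by simp [cCol, dCol])
    · exact absurd (toLex.injective h) (by simp [cCol, dCol])
    · have := toLex.injective h
      simp only [dCol, Sum.inr.injEq] at this
      omega
  · intro h
    unfold colourOfIdx
    rw [h]

private lemma colourOfIdx_c (α β : List ℕ) {i : ℕ} (h : i < α.sum) :
    colourOfIdx α β i = cCol (blockOf (α ++ β) i) := by
  unfold colourOfIdx
  rw [if_pos ((blockOf_lt_length_iff α β i).2 h)]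

private lemma mem_iff_lt_card_of_downclosed {m : ℕ} (D : Finset (Fin m))
    (hD : ∀ x y : Fin m, (y : ℕ) ≤ (x : ℕ) → x ∈ D → y ∈ D) (x : Fin m) :
    x ∈ D ↔ (x : ℕ) < D.card := by
  constructor
  · intro hx
    have hcard : (Finset.range (x.val + 1)).card ≤ D.card := by
      apply Finset.card_le_card_of_injOn
        (fun k => (⟨min k x.val, lt_of_le_of_lt (min_le_right _ _) x.isLt⟩ : Fin m))
      · intro k hk
        exact hD x _ (by simpa using min_le_right k x.val) hx
      · intro k hk k' hk' he
        simp only [Finset.coe_range, Set.mem_Iio] at hk hk'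
        have := congrArg Fin.val he
        simp only at this
        omega
    simpa using hcard
  · intro h
    by_contra hx
    have hcard : D.card ≤ (Finset.range x.val).card := by
      apply Finset.card_le_card_of_injOn (fun y : Fin m => (y : ℕ))
      · intro y hy
        simp only [Finset.coe_range, Set.mem_Iio]
        by_contra hge
        push_neg at hge
        exact hx (hD y x hge hy)
      · intro a _ b _ hab
        exact Fin.ext hab
    simp only [Finset.card_range] at hcard
    omega

private lemma cell_eq (u w : Cell lam) (h1 : u.1 = w.1) (h2 : (u.2 : ℕ) = (w.2 : ℕ)) :
    u = w := by
  obtain ⟨u1, u2⟩ := u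
  obtain ⟨w1, w2⟩ := w
  dsimp at h1 h2
  subst h1
  exact congrArg (Sigma.mk u1) (Fin.ext h2)

private lemma card_cell_row (i : Fin lam.length) (Q : Cell lam → Prop)
    [DecidablePred Q] :
    (univ.filter fun c : Cell lam => c.1 = i ∧ Q c).card
      = (univ.filter fun x : Fin (lam.get i) => Q ⟨i, x⟩).card := by
  symm
  apply Finset.card_bij (fun x _ => (⟨i, x⟩ : Cell lam))
  · intro x hx
    simp only [mem_filter, mem_univ, true_and] at hx
    exact Finset.mem_filter.mpr ⟨Finset.mem_univ _, rfl, hx⟩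
  · intro x _ y _ h
    simpa using h
  · intro c hc
    simp only [mem_filter, mem_univ, true_and] at hc
    obtain ⟨ci, cx⟩ := c
    obtain ⟨h1, h2⟩ := hc
    dsimp at h1
    subst h1
    refine ⟨cx, ?_, rfl⟩
    simp only [mem_filter, mem_univ, true_and]
    exact h2

private lemma card_cell_col (j : ℕ) (Q : Cell lam → Prop)
    [DecidablePred Q] :
    (univ.filter fun c : Cell lam => (c.2 : ℕ) = j ∧ Q c).card
      = (univ.filter fun i : Fin lam.length => ∃ h : j < lam.get i, Q ⟨i, ⟨j, h⟩⟩).card := by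
  symm
  apply Finset.card_bij (fun i hi =>
    (⟨i, ⟨j, ((Finset.mem_filter.mp hi).2).choose⟩⟩ : Cell lam))
  · intro a ha
    have hQ := ((Finset.mem_filter.mp ha).2).choose_spec
    exact Finset.mem_filter.mpr ⟨Finset.mem_univ _, rfl, hQ⟩
  · intro a _ b _ h
    exact congrArg Sigma.fst h
  · intro c hc
    simp only [mem_filter, mem_univ, true_and] at hc
    obtain ⟨ci, cx⟩ := c
    obtain ⟨h1, h2⟩ := hc
    dsimp at h1 h2
    have hlt : j < lam.get ci := h1 ▸ cx.isLt
    have hx : (⟨j, hlt⟩ : Fin (lam.get ci)) = cx := Fin.ext h1.symm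
    have hmem : ci ∈ univ.filter fun i : Fin lam.length =>
        ∃ h : j < lam.get i, Q ⟨i, ⟨j, h⟩⟩ := by
      simp only [mem_filter, mem_univ, true_and]
      exact ⟨hlt, by rw [hx]; exact h2⟩
    refine ⟨ci, hmem, ?_⟩
    exact congrArg (Sigma.mk ci) (Fin.ext h1.symm)

private lemma card_act_row (t0 : Tab n lam) {τ : Sym n} (hτ : τ ∈ rowStab t0)
    (T : Cell lam → Colour) (v : Colour) (i : Fin lam.length) :
    (univ.filter fun c : Cell lam => c.1 = i ∧ actT t0 τ T c ≤ v).card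
      = (univ.filter fun c : Cell lam => c.1 = i ∧ T c ≤ v).card := by
  have hrow : ∀ c : Cell lam, (t0.symm (τ⁻¹ (t0 c))).1 = c.1 := by
    intro c
    have h := hτ (τ⁻¹ (t0 c))
    rw [show τ (τ⁻¹ (t0 c)) = t0 c from τ.apply_symm_apply _, Equiv.symm_apply_apply] at h
    exact h.symm
  apply Finset.card_bij (fun c _ => t0.symm (τ⁻¹ (t0 c)))
  · intro c hc
    rw [Finset.mem_filter] at hc ⊢
    simp only [mem_univ, true_and, actT] at hc ⊢
    exact ⟨(hrow c).trans hc.1, hc.2⟩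
  · intro a _ b _ h
    have := congrArg t0 h
    simp only [Equiv.apply_symm_apply] at this
    have := τ⁻¹.injective this
    exact t0.injective this
  · intro c hc
    simp only [mem_filter, mem_univ, true_and] at hc
    refine ⟨t0.symm (τ (t0 c)), ?_, by simp⟩
    rw [Finset.mem_filter]
    simp only [mem_univ, true_and, actT]
    constructor
    · have h := hτ (t0 c)
      rw [Equiv.symm_apply_apply] at h
      exact h.trans hc.1
    · simp only [Equiv.apply_symm_apply, show τ⁻¹ (τ (t0 c)) = t0 c from τ.symm_apply_apply _, Equiv.symm_apply_apply]
      exact hc.2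

private lemma card_act_col (t0 : Tab n lam) {σ : Sym n} (hσ : σ ∈ colStab t0)
    (T : Cell lam → Colour) (v : Colour) (j : ℕ) :
    (univ.filter fun c : Cell lam => (c.2 : ℕ) = j ∧ actT t0 σ T c ≤ v).card
      = (univ.filter fun c : Cell lam => (c.2 : ℕ) = j ∧ T c ≤ v).card := by
  have hcol : ∀ c : Cell lam, ((t0.symm (σ⁻¹ (t0 c))).2 : ℕ) = (c.2 : ℕ) := by
    intro c
    have h := hσ (σ⁻¹ (t0 c))
    rw [show σ (σ⁻¹ (t0 c)) = t0 c from σ.apply_symm_apply _, Equiv.symm_apply_apply] at h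
    exact h.symm
  apply Finset.card_bij (fun c _ => t0.symm (σ⁻¹ (t0 c)))
  · intro c hc
    rw [Finset.mem_filter] at hc ⊢
    simp only [mem_univ, true_and, actT] at hc ⊢
    exact ⟨(hcol c).trans hc.1, hc.2⟩
  · intro a _ b _ h
    have := congrArg t0 h
    simp only [Equiv.apply_symm_apply] at this
    have := σ⁻¹.injective this
    exact t0.injective this
  · intro c hc
    simp only [mem_filter, mem_univ, true_and] at hc
    refine ⟨t0.symm (σ (t0 c)), ?_, by simp⟩
    rw [Finset.mem_filter]
    simp only [mem_univ, true_and, actT]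
    constructor
    · have h := hσ (t0 c)
      rw [Equiv.symm_apply_apply] at h
      exact h.trans hc.1
    · simp only [Equiv.apply_symm_apply, show σ⁻¹ (σ (t0 c)) = t0 c from σ.symm_apply_apply _, Equiv.symm_apply_apply]
      exact hc.2

private lemma key_eq {T S : Cell lam → Colour}
    (hrow : RowSemistd T)
    (hr : ∀ (v : Colour) (i : Fin lam.length),
      (univ.filter fun c : Cell lam => c.1 = i ∧ S c ≤ v).card =
      (univ.filter fun c : Cell lam => c.1 = i ∧ T c ≤ v).card)
    (hc : ∀ (v : Colour) (j : ℕ),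
      (univ.filter fun c : Cell lam => (c.2 : ℕ) = j ∧ S c ≤ v).card =
      (univ.filter fun c : Cell lam => (c.2 : ℕ) = j ∧ T c ≤ v).card) :
    S = T := by
  have main : ∀ (v : Colour) (j : ℕ) (c : Cell lam), (c.2 : ℕ) = j →
      (S c ≤ v ↔ T c ≤ v) := by
    intro v j
    induction j using Nat.strong_induction_on with
    | _ j IH =>
      have A1 : ∀ (i : Fin lam.length) (x : Fin (lam.get i)),
          T ⟨i, x⟩ ≤ v ↔ (x : ℕ) <
            (univ.filter fun y : Fin (lam.get i) => T ⟨i, y⟩ ≤ v).card := by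
        intro i x
        have hdown : ∀ a b : Fin (lam.get i), (b : ℕ) ≤ (a : ℕ) →
            a ∈ (univ.filter fun y : Fin (lam.get i) => T ⟨i, y⟩ ≤ v) →
            b ∈ (univ.filter fun y : Fin (lam.get i) => T ⟨i, y⟩ ≤ v) := by
          intro a b hba ha
          simp only [mem_filter, mem_univ, true_and] at ha ⊢
          rcases eq_or_lt_of_le hba with he | hlt
          · rw [Fin.ext he]; exact ha
          · exact le_trans (hrow ⟨i, b⟩ ⟨i, a⟩ rfl hlt) ha
        have := mem_iff_lt_card_of_downclosed _ hdown x
        simpa using this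
      have hrFin : ∀ i : Fin lam.length,
          (univ.filter fun y : Fin (lam.get i) => S ⟨i, y⟩ ≤ v).card
            = (univ.filter fun y : Fin (lam.get i) => T ⟨i, y⟩ ≤ v).card := by
        intro i
        have h1 := card_cell_row (lam := lam) i (fun c => S c ≤ v)
        have h2 := card_cell_row (lam := lam) i (fun c => T c ≤ v)
        exact h1.symm.trans ((hr v i).trans h2)
      have C2 : ∀ (i : Fin lam.length) (x : Fin (lam.get i)),
          (univ.filter fun y : Fin (lam.get i) => T ⟨i, y⟩ ≤ v).card ≤ j →
          (x : ℕ) = j → ¬ (S ⟨i, x⟩ ≤ v) := by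
        intro i x hrij hxj hS
        have hsub : (univ.filter fun y : Fin (lam.get i) => S ⟨i, y⟩ ≤ v ∧ (y : ℕ) < j)
            ⊆ (univ.filter fun y : Fin (lam.get i) => S ⟨i, y⟩ ≤ v) := by
          intro y hy
          simp only [mem_filter, mem_univ, true_and] at hy ⊢
          exact hy.1
        have heq : (univ.filter fun y : Fin (lam.get i) => S ⟨i, y⟩ ≤ v ∧ (y : ℕ) < j)
            = (univ.filter fun y : Fin (lam.get i) => T ⟨i, y⟩ ≤ v) := by
          apply Finset.filter_congr
          intro y _
          constructor
          · rintro ⟨hSy, hyj⟩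
            exact (IH (y : ℕ) hyj ⟨i, y⟩ rfl).1 hSy
          · intro hTy
            have hyr : (y : ℕ) <
                (univ.filter fun z : Fin (lam.get i) => T ⟨i, z⟩ ≤ v).card :=
              (A1 i y).1 hTy
            have hyj : (y : ℕ) < j := lt_of_lt_of_le hyr hrij
            exact ⟨(IH (y : ℕ) hyj ⟨i, y⟩ rfl).2 hTy, hyj⟩
        have hfull : (univ.filter fun y : Fin (lam.get i) => S ⟨i, y⟩ ≤ v)
            = (univ.filter fun y : Fin (lam.get i) => S ⟨i, y⟩ ≤ v ∧ (y : ℕ) < j) := by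
          apply (Finset.eq_of_subset_of_card_le hsub ?_).symm
          rw [heq]
          exact le_of_eq (hrFin i)
        have hx : x ∈ (univ.filter fun y : Fin (lam.get i) => S ⟨i, y⟩ ≤ v) := by
          simp only [mem_filter, mem_univ, true_and]; exact hS
        rw [hfull] at hx
        simp only [mem_filter, mem_univ, true_and] at hx
        omega
      have C3 : (univ.filter fun i : Fin lam.length =>
            ∃ h : j < lam.get i, T ⟨i, ⟨j, h⟩⟩ ≤ v)
          = (univ.filter fun i : Fin lam.length =>
            j < (univ.filter fun y : Fin (lam.get i) => T ⟨i, y⟩ ≤ v).card) := by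
        ext i
        simp only [mem_filter, mem_univ, true_and]
        constructor
        · rintro ⟨h, hT⟩
          exact (A1 i ⟨j, h⟩).1 hT
        · intro hjr
          have hri : (univ.filter fun y : Fin (lam.get i) => T ⟨i, y⟩ ≤ v).card
              ≤ lam.get i := by
            have := Finset.card_filter_le (univ : Finset (Fin (lam.get i)))
              (fun y => T ⟨i, y⟩ ≤ v)
            simpa using this
          exact ⟨lt_of_lt_of_le hjr hri, (A1 i ⟨j, lt_of_lt_of_le hjr hri⟩).2 hjr⟩
      have C5 : (univ.filter fun i : Fin lam.length =>
            ∃ h : j < lam.get i, S ⟨i, ⟨j, h⟩⟩ ≤ v)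
          = (univ.filter fun i : Fin lam.length =>
            ∃ h : j < lam.get i, T ⟨i, ⟨j, h⟩⟩ ≤ v) := by
        apply Finset.eq_of_subset_of_card_le
        · intro i hi
          simp only [mem_filter, mem_univ, true_and] at hi
          obtain ⟨h, hS⟩ := hi
          rw [C3]
          simp only [mem_filter, mem_univ, true_and]
          by_contra hle
          push_neg at hle
          exact C2 i ⟨j, h⟩ hle rfl hS
        · have h1 := card_cell_col (lam := lam) j (fun c => S c ≤ v)
          have h2 := card_cell_col (lam := lam) j (fun c => T c ≤ v)
          exact le_of_eq (h2.symm.trans ((hc v j).symm.trans h1))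
      intro c hcj
      obtain ⟨ci, cx⟩ := c
      dsimp at hcj
      have hlt : j < lam.get ci := hcj ▸ cx.isLt
      have hx : (⟨j, hlt⟩ : Fin (lam.get ci)) = cx := Fin.ext hcj.symm
      constructor
      · intro hS
        have hmem : ci ∈ (univ.filter fun i : Fin lam.length =>
            ∃ h : j < lam.get i, S ⟨i, ⟨j, h⟩⟩ ≤ v) := by
          simp only [mem_filter, mem_univ, true_and]
          exact ⟨hlt, by rw [hx]; exact hS⟩
        rw [C5] at hmem
        simp only [mem_filter, mem_univ, true_and] at hmem
        obtain ⟨h, hT⟩ := hmem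
        rwa [hx] at hT
      · intro hT
        have hmem : ci ∈ (univ.filter fun i : Fin lam.length =>
            ∃ h : j < lam.get i, T ⟨i, ⟨j, h⟩⟩ ≤ v) := by
          simp only [mem_filter, mem_univ, true_and]
          exact ⟨hlt, by rw [hx]; exact hT⟩
        rw [← C5] at hmem
        simp only [mem_filter, mem_univ, true_and] at hmem
        obtain ⟨h, hS⟩ := hmem
        rwa [hx] at hS
  funext c
  exact le_antisymm ((main (T c) (c.2 : ℕ) c rfl).2 le_rfl)
    ((main (S c) (c.2 : ℕ) c rfl).1 le_rfl)

private lemma one_mem_rowStab (t0 : Tab n lam) : (1 : Sym n) ∈ rowStab t0 := by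
  intro a; simp

private lemma one_mem_symA (α β : List ℕ) : (1 : Sym n) ∈ symA n α β :=
  ⟨Subgroup.one_mem _, fun i _ => rfl⟩

end Aux


/-- **Diagonal coefficient (Lemma 4.5).** If `𝔡 ∈ ℛ` and `T_𝔡` is semistandard, then
`𝔞_{𝔡,𝔡} = |stab_{C_{t0}}(T_𝔡)| = |C_{t0} ∩ 𝔡 Sym_{α|β} 𝔡⁻¹|`; in particular it is a
positive integer. -/
theorem coeffA_diagonal (n : ℕ) (lam : List ℕ) (hl : IsPartition n lam)
    (α β : List ℕ) (hab : IsBicomp n α β) (t0 : Tab n lam) (𝔡 : Sym n)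
    (h𝔡 : 𝔡 ∈ RSet t0 α β) (hss : IsSemistd (TOf t0 α β 𝔡))
    (hty : HasType α β (TOf t0 α β 𝔡))
    (ε : Sym n → ℤ) (hε : IsEps t0 α β 𝔡 ε) :
    coeffA t0 α β ε 𝔡 𝔡 =
      (Nat.card {σ : Sym n // σ ∈ colStab t0 ∧
        actT t0 σ (TOf t0 α β 𝔡) = TOf t0 α β 𝔡} : ℤ) ∧
    coeffA t0 α β ε 𝔡 𝔡 =
      (Nat.card ↥(colStab t0 ∩
        {x : Sym n | ∃ ξ ∈ youngSubgroup n (α ++ β), x = 𝔡 * ξ * 𝔡⁻¹}) : ℤ) ∧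
    0 < coeffA t0 α β ε 𝔡 𝔡 := by
  classical
  set T : Cell lam → Colour := TOf t0 α β 𝔡 with hT
  have hTapp' : ∀ x : Fin n, T (t0.symm x) = colourOfIdx α β (𝔡⁻¹ x) := by
    intro x
    simp [hT, TOf, actT, canonT]
  have hYcol : ∀ ξ : Sym n, ξ ∈ youngSubgroup n (α ++ β) → ∀ x : Fin n,
      colourOfIdx α β (ξ x) = colourOfIdx α β x := by
    intro ξ hξ x
    exact (colourOfIdx_eq_iff α β _ _).2 (mem_young_iff.mp hξ x)
  -- stabilizing T ↔ conjugate lies in the Young subgroup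
  have hstab_iff : ∀ σ : Sym n,
      actT t0 σ T = T ↔ 𝔡⁻¹ * σ * 𝔡 ∈ youngSubgroup n (α ++ β) := by
    intro σ
    constructor
    · intro h
      have h' : ∀ x : Fin n,
          colourOfIdx α β (𝔡⁻¹ (σ⁻¹ x)) = colourOfIdx α β (𝔡⁻¹ x) := by
        intro x
        have := congrFun h (t0.symm x)
        simp only [actT, Equiv.apply_symm_apply] at this
        rw [hTapp', hTapp'] at this
        exact this
      have hη' : 𝔡⁻¹ * σ⁻¹ * 𝔡 ∈ youngSubgroup n (α ++ β) := by
        rw [mem_young_iff]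
        intro z
        have h2 := h' (𝔡 z)
        have hz : (𝔡⁻¹ : Sym n) (𝔡 z) = z := by simp
        rw [hz] at h2
        have := (colourOfIdx_eq_iff α β _ _).1 h2
        simpa [Equiv.Perm.mul_apply] using this
      have hrw : (𝔡⁻¹ * σ⁻¹ * 𝔡)⁻¹ = 𝔡⁻¹ * σ * 𝔡 := by group
      exact hrw ▸ (Subgroup.inv_mem _ hη')
    · intro h
      funext c
      show T (t0.symm (σ⁻¹ (t0 c))) = T c
      have hξ : (𝔡⁻¹ * σ * 𝔡)⁻¹ ∈ youngSubgroup n (α ++ β) := Subgroup.inv_mem _ h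
      have hgrp : 𝔡⁻¹ * σ⁻¹ = (𝔡⁻¹ * σ * 𝔡)⁻¹ * 𝔡⁻¹ := by group
      have hpt : (𝔡⁻¹ : Sym n) (σ⁻¹ (t0 c))
          = ((𝔡⁻¹ * σ * 𝔡)⁻¹ : Sym n) (𝔡⁻¹ (t0 c)) := by
        have := congrArg (fun g : Sym n => g (t0 c)) hgrp
        simpa [Equiv.Perm.mul_apply] using this
      rw [hTapp', hpt, hYcol _ hξ]
      conv_rhs => rw [show c = t0.symm (t0 c) by simp]
      rw [hTapp']
  -- stabilizers in the column group land in symB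
  have hsymB : ∀ σ : Sym n, σ ∈ colStab t0 → actT t0 σ T = T →
      𝔡⁻¹ * σ * 𝔡 ∈ symB n α β := by
    intro σ hσC hσT
    refine ⟨(hstab_iff σ).1 hσT, ?_⟩
    intro i hi
    by_contra hne
    have hσa : σ (𝔡 i) ≠ 𝔡 i := by
      intro hfix
      apply hne
      simp [Equiv.Perm.mul_apply, hfix]
    have hcc' : t0.symm (𝔡 i) ≠ t0.symm (σ (𝔡 i)) := by
      intro h
      exact hσa (t0.symm.injective h).symm
    have hcol : ((t0.symm (σ (𝔡 i))).2 : ℕ) = ((t0.symm (𝔡 i)).2 : ℕ) := hσC (𝔡 i)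
    have hTeq : T (t0.symm (𝔡 i)) = T (t0.symm (σ (𝔡 i))) := by
      have := congrFun hσT (t0.symm (σ (𝔡 i)))
      simp only [actT, Equiv.apply_symm_apply, show σ⁻¹ (σ (𝔡 i)) = 𝔡 i from σ.symm_apply_apply _] at this
      exact this
    have hrowne : (t0.symm (𝔡 i)).1 ≠ (t0.symm (σ (𝔡 i))).1 := by
      intro h
      exact hcc' (cell_eq _ _ h hcol.symm)
    obtain ⟨k, hk⟩ := hss.2.2.2 (t0.symm (𝔡 i)) (t0.symm (σ (𝔡 i))) hcol.symm hrowne hTeq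
    rw [hTapp'] at hk
    have hki : colourOfIdx α β i = dCol k := by
      simpa using hk
    rw [colourOfIdx_c α β hi] at hki
    exact absurd (toLex.injective hki) (by simp [cCol, dCol])
  -- membership in the double coset ↔ stabilizing T
  have hQP : ∀ σ : Sym n, σ ∈ colStab t0 →
      (σ * 𝔡 ∈ dCoset t0 α β 𝔡 ↔ actT t0 σ T = T) := by
    intro σ hσ
    constructor
    · rintro ⟨τ, hτ, ξ, hξ, hτξ⟩
      have hgrp : 𝔡⁻¹ * σ⁻¹ = ξ⁻¹ * (𝔡⁻¹ * τ⁻¹) := by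
        have h1 : (σ * 𝔡)⁻¹ = (τ * 𝔡 * ξ)⁻¹ := by rw [hτξ]
        simp only [mul_inv_rev] at h1
        rw [show σ = τ * 𝔡 * ξ * 𝔡⁻¹ by rw [← hτξ]; group]; group
      have hST : actT t0 σ T = actT t0 τ T := by
        funext c
        show T (t0.symm (σ⁻¹ (t0 c))) = T (t0.symm (τ⁻¹ (t0 c)))
        rw [hTapp', hTapp']
        have hpt : (𝔡⁻¹ : Sym n) (σ⁻¹ (t0 c))
            = (ξ⁻¹ : Sym n) ((𝔡⁻¹ : Sym n) (τ⁻¹ (t0 c))) := by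
          have := congrArg (fun g : Sym n => g (t0 c)) hgrp
          simpa [Equiv.Perm.mul_apply] using this
        rw [hpt, hYcol _ (Subgroup.inv_mem _ hξ)]
      have hτT : actT t0 τ T = T := by
        apply key_eq hss.1
        · intro v i
          exact card_act_row t0 hτ T v i
        · intro v j
          have := card_act_col t0 hσ T v j
          rwa [hST] at this
      exact hST.trans hτT
    · intro h
      refine ⟨1, one_mem_rowStab t0, 𝔡⁻¹ * σ * 𝔡, (hstab_iff σ).1 h, by group⟩
  -- each contribution is 1
  have hval : ∀ σ : Sym n, σ ∈ colStab t0 → actT t0 σ T = T →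
      (Equiv.Perm.sign σ : ℤ) * ε (σ * 𝔡) = 1 := by
    intro σ hσ hst
    have hB := hsymB σ hσ hst
    have hεv : ε (σ * 𝔡) = (Equiv.Perm.sign (𝔡⁻¹ * σ * 𝔡) : ℤ) := by
      have h1 := hε 1 (one_mem_rowStab t0) 1 (one_mem_symA α β) (𝔡⁻¹ * σ * 𝔡) hB
      have harg : (1 : Sym n) * 𝔡 * (1 * (𝔡⁻¹ * σ * 𝔡)) = σ * 𝔡 := by group
      rwa [harg] at h1
    rw [hεv]
    have hsgn : Equiv.Perm.sign (𝔡⁻¹ * σ * 𝔡) = Equiv.Perm.sign σ := by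
      rcases Int.units_eq_one_or (Equiv.Perm.sign 𝔡) with h | h <;>
        simp [map_mul, map_inv, h, mul_comm]
    rw [hsgn]
    rcases Int.units_eq_one_or (Equiv.Perm.sign σ) with h | h <;> simp [h]
  -- the sum counts the stabilizer
  have hcoeff : coeffA t0 α β ε 𝔡 𝔡 =
      ((univ.filter fun σ : Sym n => σ ∈ colStab t0 ∧ actT t0 σ T = T).card : ℤ) := by
    unfold coeffA
    have hterm : ∀ σ : Sym n,
        (if σ ∈ colStab t0 ∧ σ * 𝔡 ∈ dCoset t0 α β 𝔡
          then (Equiv.Perm.sign σ : ℤ) * ε (σ * 𝔡) else 0)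
        = (if σ ∈ colStab t0 ∧ actT t0 σ T = T then (1 : ℤ) else 0) := by
      intro σ
      by_cases h1 : σ ∈ colStab t0 ∧ actT t0 σ T = T
      · rw [if_pos h1, if_pos ⟨h1.1, (hQP σ h1.1).2 h1.2⟩, hval σ h1.1 h1.2]
      · rw [if_neg h1, if_neg]
        intro h2
        exact h1 ⟨h2.1, (hQP σ h2.1).1 h2.2⟩
    rw [Finset.sum_congr rfl (fun σ _ => hterm σ), Finset.sum_boole]
  have hcard1 : (Nat.card {σ : Sym n // σ ∈ colStab t0 ∧ actT t0 σ T = T})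
      = (univ.filter fun σ : Sym n => σ ∈ colStab t0 ∧ actT t0 σ T = T).card := by
    rw [Nat.card_eq_fintype_card, Fintype.card_subtype]
  have hiff2 : ∀ σ : Sym n,
      (σ ∈ colStab t0 ∧ actT t0 σ T = T) ↔
      σ ∈ colStab t0 ∩ {x : Sym n | ∃ ξ ∈ youngSubgroup n (α ++ β), x = 𝔡 * ξ * 𝔡⁻¹} := by
    intro σ
    rw [Set.mem_inter_iff]
    apply and_congr_right
    intro _
    rw [hstab_iff σ]
    constructor
    · intro h
      exact ⟨𝔡⁻¹ * σ * 𝔡, h, by group⟩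
    · rintro ⟨ξ, hξ, rfl⟩
      have : 𝔡⁻¹ * (𝔡 * ξ * 𝔡⁻¹) * 𝔡 = ξ := by group
      rw [this]
      exact hξ
  refine ⟨?_, ?_, ?_⟩
  · rw [hcoeff]
    norm_cast
    exact hcard1.symm
  · rw [hcoeff]
    norm_cast
    rw [← Nat.card_congr (Equiv.subtypeEquivRight hiff2)]
    exact hcard1.symm
  · rw [hcoeff]
    have hpos : 0 < (univ.filter fun σ : Sym n =>
        σ ∈ colStab t0 ∧ actT t0 σ T = T).card := by
      apply Finset.card_pos.mpr
      refine ⟨1, Finset.mem_filter.mpr ⟨Finset.mem_univ _, ?_, ?_⟩⟩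
      · intro a; simp
      · funext c; simp [actT]
    exact_mod_cast hpos


end SignedYoung
end

section
/- Suppose $\mathrm{T}_d$ is a semistandard $\lambda$-tableau of type $(\alpha|\beta)$ and $d' \in \mathrm{Sym}_n$ satisfies $\mathfrak{a}_{d',d} \ne 0$. Then $d' \unrhd d$ in the column-dominance pre-order, i.e., $\mathrm{T}_{d'} \unrhd \mathrm{T}_d$. -/
namespace SignedYoung
open Equiv Finset
open scoped Classical

/-! ### Auxiliary lemmas -/

section Aux

variable {γ : Type*} [LinearOrder γ]

lemma sorted_get_mono {L : List γ} (hL : L.Pairwise (· ≤ ·)) {i j : ℕ} (hij : i ≤ j)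
    (hj : j < L.length) : L.get ⟨i, lt_of_le_of_lt hij hj⟩ ≤ L.get ⟨j, hj⟩ := by
  rcases Nat.eq_or_lt_of_le hij with h | h
  · subst h; exact le_rfl
  · exact List.pairwise_iff_get.1 hL ⟨i, by omega⟩ ⟨j, hj⟩ h

lemma filt_le_of_lt (L : List γ) (hL : L.Pairwise (· ≤ ·)) (s : ℕ) (hs : s < L.length)
    (x : γ) (hx : x < L.get ⟨s, hs⟩) :
    (L.filter (fun y => decide (y ≤ x))).length ≤ s := by
  have hdrop : (L.drop s).filter (fun y => decide (y ≤ x)) = [] := by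
    rw [List.filter_eq_nil_iff]
    intro a ha
    simp only [decide_eq_true_eq]
    obtain ⟨i, hi, hget⟩ := List.getElem_of_mem (by simpa using ha)
    rw [List.getElem_drop] at hget
    have hlen : s + i < L.length := by
      have : (L.drop s).length = L.length - s := List.length_drop; omega
    have h1 : L.get ⟨s, hs⟩ ≤ a := by
      rw [← hget]; exact sorted_get_mono hL (Nat.le_add_right s i) hlen
    intro hax
    exact absurd (h1.trans hax) (not_le_of_gt hx)
  calc (L.filter (fun y => decide (y ≤ x))).length
      = ((L.take s ++ L.drop s).filter (fun y => decide (y ≤ x))).length := by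
        rw [List.take_append_drop]
    _ ≤ s := by
        rw [List.filter_append, hdrop, List.length_append, List.length_nil]
        exact le_trans (List.length_filter_le _ _) (by simpa using List.length_take_le s L)

lemma filt_ge_succ (L : List γ) (hL : L.Pairwise (· ≤ ·)) (s : ℕ) (hs : s < L.length) :
    s + 1 ≤ (L.filter (fun y => decide (y ≤ L.get ⟨s, hs⟩))).length := by
  set x := L.get ⟨s, hs⟩
  have htake : (L.take (s+1)).filter (fun y => decide (y ≤ x)) = L.take (s+1) := by
    rw [List.filter_eq_self]
    intro a ha
    simp only [decide_eq_true_eq]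
    obtain ⟨i, hi, hget⟩ := List.getElem_of_mem ha
    rw [List.getElem_take] at hget
    rw [← hget]
    exact sorted_get_mono hL (by { have : (L.take (s+1)).length = min (s+1) L.length := List.length_take; omega }) hs
  calc s + 1 = (L.take (s+1)).length := by rw [List.length_take]; omega
    _ = ((L.take (s+1)).filter (fun y => decide (y ≤ x))).length := by rw [htake]
    _ ≤ (L.filter (fun y => decide (y ≤ x))).length := by
        conv_rhs => rw [← List.take_append_drop (s+1) L]
        rw [List.filter_append, List.length_append]
        omega

lemma sorted_pointwise (L L' : List γ) (hL : L.Pairwise (· ≤ ·)) (hL' : L'.Pairwise (· ≤ ·))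
    (hlen : L.length = L'.length)
    (hcnt : ∀ x, (L'.filter (fun y => decide (y ≤ x))).length ≤
      (L.filter (fun y => decide (y ≤ x))).length)
    (s : ℕ) (hs : s < L.length) : L.get ⟨s, hs⟩ ≤ L'.get ⟨s, hlen ▸ hs⟩ := by
  by_contra hcon
  push_neg at hcon
  set x := L'.get ⟨s, hlen ▸ hs⟩ with hx
  have h1 : s + 1 ≤ (L'.filter (fun y => decide (y ≤ x))).length :=
    filt_ge_succ L' hL' s (hlen ▸ hs)
  have h2 : (L.filter (fun y => decide (y ≤ x))).length ≤ s :=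
    filt_le_of_lt L hL s hs x hcon
  have := (h1.trans (hcnt x)).trans h2
  omega

lemma lists_first_diff (L L' : List γ) (hlen : L.length = L'.length) (hne : L ≠ L')
    (d0 : γ) :
    ∃ k, k < L.length ∧ (∀ s, s < k → L.getD s d0 = L'.getD s d0) ∧
      L.getD k d0 ≠ L'.getD k d0 := by
  have hex : ∃ k, L.getD k d0 ≠ L'.getD k d0 := by
    by_contra hall
    push_neg at hall
    apply hne
    apply List.ext_getElem hlen
    intro i h1 h2
    have := hall i
    rwa [List.getD_eq_getElem _ _ h1, List.getD_eq_getElem _ _ h2] at this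
  refine ⟨Nat.find hex, ?_, ?_, Nat.find_spec hex⟩
  · by_contra hk
    push_neg at hk
    apply Nat.find_spec hex
    rw [List.getD_eq_default _ _ hk, List.getD_eq_default _ _ (hlen ▸ hk)]
  · intro s hsk
    have := Nat.find_min hex hsk
    push_neg at this
    exact this

lemma rowCount {m : ℕ} (f : Fin m → γ) (π : Fin m → Fin m) (hπ : Function.Injective π)
    (hmono : ∀ p q : Fin m, (p : ℕ) ≤ (q : ℕ) → f p ≤ f q) (j : ℕ) (x : γ) :
    (univ.filter fun p : Fin m => (p : ℕ) ≤ j ∧ f (π p) ≤ x).card ≤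
      (univ.filter fun p : Fin m => (p : ℕ) ≤ j ∧ f p ≤ x).card := by
  by_cases hcase : ∀ p : Fin m, (p : ℕ) ≤ j → f p ≤ x
  · apply Finset.card_le_card
    intro p hp
    simp only [Finset.mem_filter, Finset.mem_univ, true_and] at hp ⊢
    exact ⟨hp.1, hcase p hp.1⟩
  · push_neg at hcase
    obtain ⟨p0, hp0j, hp0x⟩ := hcase
    have hBsub : (univ.filter fun p : Fin m => f p ≤ x) ⊆
        (univ.filter fun p : Fin m => (p : ℕ) ≤ j ∧ f p ≤ x) := by
      intro p hp
      simp only [Finset.mem_filter, Finset.mem_univ, true_and] at hp ⊢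
      refine ⟨?_, hp⟩
      by_contra hpj
      push_neg at hpj
      have hle : (p0 : ℕ) ≤ (p : ℕ) := by omega
      exact absurd ((hmono p0 p hle).trans hp) (not_le_of_gt hp0x)
    refine le_trans ?_ (Finset.card_le_card hBsub)
    apply Finset.card_le_card_of_injOn π
    · intro p hp
      simp only [Finset.coe_filter, Finset.mem_coe, Set.mem_setOf_eq, Finset.mem_filter, Finset.mem_univ, true_and] at hp ⊢
      exact hp.2
    · exact hπ.injOn

end Aux

section Main

variable {n : ℕ} {lam : List ℕ}

lemma msGT_of_counts (m m' : Multiset Colour) (hcard : Multiset.card m = Multiset.card m')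
    (hne : m' ≠ m)
    (hcnt : ∀ x, Multiset.card (m'.filter (fun y => y ≤ x)) ≤
      Multiset.card (m.filter (fun y => y ≤ x))) :
    msGT m' m := by
  set L : List Colour := sortedCol m with hLdef
  set L' : List Colour := sortedCol m' with hL'def
  have hLs : L.Pairwise (· ≤ ·) := Multiset.pairwise_sort m _
  have hL's : L'.Pairwise (· ≤ ·) := Multiset.pairwise_sort m' _
  have hcoe : (L : Multiset Colour) = m := Multiset.sort_eq m _
  have hcoe' : (L' : Multiset Colour) = m' := Multiset.sort_eq m' _
  have hlen : L.length = L'.length := by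
    have h1 : Multiset.card (L : Multiset Colour) = Multiset.card (L' : Multiset Colour) := by
      rw [hcoe, hcoe', hcard]
    simpa using h1
  have hlistcnt : ∀ (K : List Colour) (x : Colour),
      Multiset.card ((K : Multiset Colour).filter (fun y => y ≤ x)) =
        (K.filter (fun y => decide (y ≤ x))).length := by
    intro K x
    rw [Multiset.filter_coe]
    simp
  have hcnt' : ∀ x, (L'.filter (fun y => decide (y ≤ x))).length ≤
      (L.filter (fun y => decide (y ≤ x))).length := by
    intro x
    rw [← hlistcnt L x, ← hlistcnt L' x, hcoe, hcoe']
    exact hcnt x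
  have hLne : L ≠ L' := by
    intro hEq
    exact hne (by rw [← hcoe, ← hcoe', hEq])
  obtain ⟨k, hk, hpre, hdiff⟩ := lists_first_diff L L' hlen hLne (cCol 0)
  refine ⟨k, ?_, ?_⟩
  · intro s hsk
    exact (hpre s hsk).symm
  · have hget : L.getD k (cCol 0) = L.get ⟨k, hk⟩ := List.getD_eq_getElem _ _ hk
    have hget' : L'.getD k (cCol 0) = L'.get ⟨k, hlen ▸ hk⟩ :=
      List.getD_eq_getElem _ _ (hlen ▸ hk)
    have hle := sorted_pointwise L L' hLs hL's hlen hcnt' k hk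
    rw [hget, hget']
    exact lt_of_le_of_ne hle (by rw [← hget, ← hget']; exact hdiff)

/-- Count of cells in columns `≤ j` with colour `≤ x`. -/
noncomputable def cnt (T : Cell lam → Colour) (j : ℕ) (x : Colour) : ℕ :=
  (univ.filter fun c : Cell lam => (c.2 : ℕ) ≤ j ∧ T c ≤ x).card

/-- Count of entries `≤ x` in column `j`. -/
noncomputable def colcnt (T : Cell lam → Colour) (j : ℕ) (x : Colour) : ℕ :=
  Multiset.card ((colMul T j).filter (fun y => y ≤ x))

lemma colcnt_eq (T : Cell lam → Colour) (j : ℕ) (x : Colour) :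
    colcnt T j x = (univ.filter fun c : Cell lam => (c.2 : ℕ) = j ∧ T c ≤ x).card := by
  unfold colcnt colMul
  rw [Multiset.filter_map]
  rw [Multiset.card_map]
  have : ((univ.filter fun c : Cell lam => (c.2 : ℕ) = j).val.filter
      ((fun y => y ≤ x) ∘ T)) = ((univ.filter fun c : Cell lam => (c.2 : ℕ) = j).filter
      (fun c => T c ≤ x)).val := by
    rw [Finset.filter_val]
    rfl
  rw [this, ← Finset.card_def, Finset.filter_filter]

lemma cnt_eq_sum (T : Cell lam → Colour) (j : ℕ) (x : Colour) :
    cnt T j x = ∑ j' ∈ Finset.range (j + 1), colcnt T j' x := by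
  induction j with
  | zero =>
    rw [Finset.sum_range_one, colcnt_eq, cnt]
    congr 1
    apply Finset.filter_congr
    intro c _
    simp [Nat.le_zero]
  | succ j ih =>
    rw [Finset.sum_range_succ, ← ih, colcnt_eq, cnt, cnt]
    have hsplit : (univ.filter fun c : Cell lam => (c.2 : ℕ) ≤ j + 1 ∧ T c ≤ x) =
        (univ.filter fun c : Cell lam => (c.2 : ℕ) ≤ j ∧ T c ≤ x) ∪
          (univ.filter fun c : Cell lam => (c.2 : ℕ) = j + 1 ∧ T c ≤ x) := by
      rw [← Finset.filter_or]
      apply Finset.filter_congr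
      intro c _
      constructor
      · rintro ⟨h1, h2⟩
        rcases Nat.le_succ_iff_eq_or_le.1 h1 with h | h
        · exact Or.inr ⟨h, h2⟩
        · exact Or.inl ⟨h, h2⟩
      · rintro (⟨h1, h2⟩ | ⟨h1, h2⟩)
        · exact ⟨Nat.le_succ_of_le h1, h2⟩
        · exact ⟨le_of_eq h1, h2⟩
    rw [hsplit, Finset.card_union_of_disjoint]
    rw [Finset.disjoint_filter]
    intro c _ h1 h2
    omega

lemma filter_sigma_card (P : Cell lam → Prop) [DecidablePred P] :
    (univ.filter P).card =
      ∑ i : Fin lam.length, (univ.filter fun p : Fin (lam.get i) => P ⟨i, p⟩).card := by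
  have h : (univ.filter P) =
      (univ : Finset (Fin lam.length)).sigma
        (fun i => univ.filter fun p : Fin (lam.get i) => P ⟨i, p⟩) := by
    ext ⟨i, p⟩
    simp [Finset.mem_sigma]
  rw [h, Finset.card_sigma]

lemma cnt_mono (T : Cell lam → Colour) (hT : RowSemistd T) (r : Cell lam ≃ Cell lam)
    (hr : ∀ c, (r c).1 = c.1) (j : ℕ) (x : Colour) :
    cnt (fun c => T (r c)) j x ≤ cnt T j x := by
  unfold cnt
  beta_reduce
  rw [filter_sigma_card, filter_sigma_card]
  apply Finset.sum_le_sum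
  intro i _
  have hcell : ∀ (c : Cell lam) (h : c.1 = i), c = ⟨i, ⟨(c.2 : ℕ), lt_of_lt_of_eq c.2.isLt (congrArg lam.get h)⟩⟩ := by
    rintro ⟨a, b⟩ h
    subst h
    rfl
  set π : Fin (lam.get i) → Fin (lam.get i) :=
    fun p => ⟨((r ⟨i, p⟩).2 : ℕ), lt_of_lt_of_eq (r ⟨i, p⟩).2.isLt (congrArg lam.get (hr ⟨i, p⟩))⟩ with hπdef
  have hreq : ∀ p : Fin (lam.get i), r ⟨i, p⟩ = ⟨i, π p⟩ :=
    fun p => hcell _ (hr ⟨i, p⟩)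
  have hπinj : Function.Injective π := by
    intro p q hpq
    have h1 : r ⟨i, p⟩ = r ⟨i, q⟩ := by rw [hreq p, hreq q, hpq]
    have h2 : (⟨i, p⟩ : Cell lam) = ⟨i, q⟩ := r.injective h1
    have h3 := (Sigma.mk.inj_iff.1 h2).2
    exact eq_of_heq h3
  have hmono : ∀ p q : Fin (lam.get i), (p : ℕ) ≤ (q : ℕ) →
      T ⟨i, p⟩ ≤ T ⟨i, q⟩ := by
    intro p q hpq
    rcases Nat.eq_or_lt_of_le hpq with h | h
    · rw [Fin.ext h]
    · exact hT ⟨i, p⟩ ⟨i, q⟩ rfl h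
  have hre : (univ.filter fun p : Fin (lam.get i) => (p : ℕ) ≤ j ∧ T (r ⟨i, p⟩) ≤ x) =
      (univ.filter fun p : Fin (lam.get i) => (p : ℕ) ≤ j ∧ T ⟨i, π p⟩ ≤ x) := by
    apply Finset.filter_congr
    intro p _
    rw [hreq p]
  rw [hre]
  exact rowCount (fun p => T ⟨i, p⟩) π hπinj hmono j x

lemma colMul_card (T : Cell lam → Colour) (j : ℕ) :
    Multiset.card (colMul T j) = (univ.filter fun c : Cell lam => (c.2 : ℕ) = j).card := by
  unfold colMul
  rw [Multiset.card_map]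
  rfl

lemma key_dominance (T : Cell lam → Colour) (hT : RowSemistd T) (r : Cell lam ≃ Cell lam)
    (hr : ∀ c, (r c).1 = c.1) : TabGE (fun c => T (r c)) T := by
  set T' : Cell lam → Colour := fun c => T (r c) with hT'def
  by_cases hall : ∀ j, colMul T' j = colMul T j
  · exact Or.inl hall
  · push_neg at hall
    have hex : ∃ j, colMul T' j ≠ colMul T j := hall
    set t := Nat.find hex with htdef
    have htne : colMul T' t ≠ colMul T t := Nat.find_spec hex
    have htpre : ∀ j, j < t → colMul T' j = colMul T j := by
      intro j hj
      have := Nat.find_min hex hj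
      push_neg at this
      exact this
    refine Or.inr ⟨t, htpre, ?_⟩
    have hcolcnt : ∀ x, colcnt T' t x ≤ colcnt T t x := by
      intro x
      have h1 := cnt_mono T hT r hr t x
      rw [← hT'def] at h1
      rw [cnt_eq_sum, cnt_eq_sum, Finset.sum_range_succ, Finset.sum_range_succ] at h1
      have h2 : ∑ j' ∈ Finset.range t, colcnt T' j' x =
          ∑ j' ∈ Finset.range t, colcnt T j' x := by
        apply Finset.sum_congr rfl
        intro j' hj'
        unfold colcnt
        rw [htpre j' (Finset.mem_range.1 hj')]
      rw [h2] at h1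
      omega
    apply msGT_of_counts
    · rw [colMul_card, colMul_card]
    · exact htne
    · exact hcolcnt

lemma TOf_apply (t0 : Tab n lam) (α β : List ℕ) (d : Sym n) (c : Cell lam) :
    TOf t0 α β d c = colourOfIdx α β (d⁻¹ (t0 c)) := by
  simp [TOf, actT, canonT]

lemma colourOfIdx_young {α β : List ℕ} {ξ : Sym n} (hξ : ξ ∈ youngSubgroup n (α ++ β))
    (i : Fin n) : colourOfIdx α β (ξ i) = colourOfIdx α β i := by
  have h : blockOf (α ++ β) (ξ i) = blockOf (α ++ β) i := hξ i
  unfold colourOfIdx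
  rw [h]

lemma rowStab_inv_s18 {t0 : Tab n lam} {τ : Sym n} (hτ : τ ∈ rowStab t0) :
    τ⁻¹ ∈ rowStab t0 := by
  intro a
  have h := hτ (τ⁻¹ a)
  rw [show τ (τ⁻¹ a) = a from τ.apply_symm_apply a] at h
  exact h.symm

lemma colMul_comp_colpres (U : Cell lam → Colour) (s : Cell lam ≃ Cell lam)
    (hs : ∀ c, ((s c).2 : ℕ) = (c.2 : ℕ)) (j : ℕ) :
    colMul (fun c => U (s c)) j = colMul U j := by
  unfold colMul
  have himg : (univ.filter fun c : Cell lam => (c.2 : ℕ) = j).map s.toEmbedding =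
      (univ.filter fun c : Cell lam => (c.2 : ℕ) = j) := by
    ext a
    rw [Finset.mem_map_equiv]
    simp only [Finset.mem_filter, Finset.mem_univ, true_and]
    have := hs (s.symm a)
    rw [Equiv.apply_symm_apply] at this
    rw [this]
  calc (univ.filter fun c : Cell lam => (c.2 : ℕ) = j).val.map (fun c => U (s c))
      = ((univ.filter fun c : Cell lam => (c.2 : ℕ) = j).val.map s).map U := by
        rw [Multiset.map_map]; rfl
    _ = ((univ.filter fun c : Cell lam => (c.2 : ℕ) = j).map s.toEmbedding).val.map U := rfl
    _ = (univ.filter fun c : Cell lam => (c.2 : ℕ) = j).val.map U := by rw [himg]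

end Main

/-- **Dominance (Lemma 4.2(iii)).** If `T_d` is semistandard and `𝔞_{d',d} ≠ 0`, then
`T_{d'} ⊵ T_d` in the column-dominance pre-order. -/
theorem coeffA_ne_zero_dominance (n : ℕ) (lam : List ℕ) (hl : IsPartition n lam)
    (α β : List ℕ) (hab : IsBicomp n α β) (t0 : Tab n lam) (d d' : Sym n)
    (hss : IsSemistd (TOf t0 α β d)) (hd : d ∈ RSet t0 α β)
    (ε : Sym n → ℤ) (hε : IsEps t0 α β d ε)
    (h : coeffA t0 α β ε d' d ≠ 0) :
    TabGE (TOf t0 α β d') (TOf t0 α β d) := by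
  classical
  -- extract a nonzero term of the sum
  have hterm : ∃ σ : Sym n, σ ∈ colStab t0 ∧ σ * d' ∈ dCoset t0 α β d := by
    by_contra hcon
    push_neg at hcon
    apply h
    unfold coeffA
    apply Finset.sum_eq_zero
    intro σ _
    rw [if_neg]
    rintro ⟨h1, h2⟩
    exact absurd h2 (hcon σ h1)
  obtain ⟨σ, hσcol, τ, hτ, ξ, hξ, heq⟩ := hterm
  -- d'⁻¹ = ξ⁻¹ * d⁻¹ * τ⁻¹ * σ
  have hd' : d' = σ⁻¹ * (τ * d * ξ) := by
    rw [← heq]; group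
  have hinv : d'⁻¹ = ξ⁻¹ * (d⁻¹ * (τ⁻¹ * σ)) := by
    rw [hd']; group
  set T : Cell lam → Colour := TOf t0 α β d with hTdef
  set r : Cell lam ≃ Cell lam := (t0.trans (τ⁻¹ : Sym n)).trans t0.symm with hrdef
  set s : Cell lam ≃ Cell lam := (t0.trans σ).trans t0.symm with hsdef
  have hr : ∀ c, (r c).1 = c.1 := by
    intro c
    have h1 := rowStab_inv_s18 hτ (t0 c)
    rw [Equiv.symm_apply_apply] at h1
    exact h1
  have hs : ∀ c, ((s c).2 : ℕ) = ((c.2 : ℕ)) := by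
    intro c
    have h1 := hσcol (t0 c)
    rw [Equiv.symm_apply_apply] at h1
    exact h1
  have hTof : ∀ c, TOf t0 α β d' c = T (r (s c)) := by
    intro c
    rw [hTdef, TOf_apply, TOf_apply]
    have ht0rs : t0 (r (s c)) = τ⁻¹ (σ (t0 c)) := by
      simp [hrdef, hsdef]
    rw [ht0rs, hinv]
    have hξinv : ξ⁻¹ ∈ youngSubgroup n (α ++ β) := (youngSubgroup n (α ++ β)).inv_mem hξ
    have := colourOfIdx_young hξinv (d⁻¹ (τ⁻¹ (σ (t0 c))))
    simp only [Equiv.Perm.mul_apply] at this ⊢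
    exact this
  -- column multisets of T_{d'} agree with those of T ∘ r
  have hcol : ∀ j, colMul (TOf t0 α β d') j = colMul (fun c => T (r c)) j := by
    intro j
    have hfun : TOf t0 α β d' = fun c => (fun c' => T (r c')) (s c) := funext hTof
    rw [hfun]
    exact colMul_comp_colpres (fun c' => T (r c')) s hs j
  have hkey : TabGE (fun c => T (r c)) T := key_dominance T hss.1 r hr
  rcases hkey with hk | ⟨t, hpre, hgt⟩
  · exact Or.inl (fun j => (hcol j).trans (hk j))
  · exact Or.inr ⟨t, fun j hj => (hcol j).trans (hpre j hj), by rw [hcol t]; exact hgt⟩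


end SignedYoung
end
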